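/- arXiv:2605.02211 — 8 statements merged into one kernel-verified Lean document; each statement's English description precedes it below -/
import Mathlib

section
/- Let M ∈ ℂ^{2^r × 2^r} be a nonzero Hermitian positive semidefinite matrix that is not of full rank. Then for every n and every α > 0, there exist m = ⌊n/r⌋ pairwise disjoint r-subsets T_1,…,T_m of [n] and unit vectors ψ_1,…,ψ_m ∈ ℂ^{2^n} such that ⟨ψ_i, (M|_{T_i} ⊗ Id)ψ_i⟩ > 0 while ⟨ψ_i, (M|_{T_j} ⊗ Id)ψ_i⟩ = 0 for all j ≠ i. Consequently the non-redundancy NRD(M, n) is at least ⌊n/r⌋. -/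
open scoped Classical ComplexOrder
open Matrix

noncomputable def localOp {n r : ℕ} (M : Matrix (Fin r → Fin 2) (Fin r → Fin 2) ℂ)
    (T : Fin r → Fin n) : Matrix (Fin n → Fin 2) (Fin n → Fin 2) ℂ :=
  Matrix.of fun x y =>
    if ∀ i : Fin n, i ∉ Set.range T → x i = y i then M (x ∘ T) (y ∘ T) else 0

section Aux

variable {r n : ℕ}

/-- The `i`-th block of `r` consecutive qubits. -/
def Tmap (r n : ℕ) (i : Fin (n / r)) (k : Fin r) : Fin n :=
  ⟨i.val * r + k.val, by
    have h1 : i.val * r + k.val < (i.val + 1) * r := by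
      simp [add_mul]
    have h2 : (i.val + 1) * r ≤ (n / r) * r :=
      Nat.mul_le_mul_right _ (Nat.succ_le_of_lt i.isLt)
    exact lt_of_lt_of_le h1 (le_trans h2 (Nat.div_mul_le_self n r))⟩

/-- Assemble a family of block bit strings into a global bit string (zero outside blocks). -/
def assemble (r n : ℕ) (hr : 0 < r) (a : Fin (n / r) → Fin r → Fin 2) : Fin n → Fin 2 :=
  fun q =>
    if h : q.val < (n / r) * r then
      a ⟨q.val / r, (Nat.div_lt_iff_lt_mul hr).2 h⟩ ⟨q.val % r, Nat.mod_lt _ hr⟩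
    else 0

lemma Tmap_lt (i : Fin (n / r)) (k : Fin r) : (Tmap r n i k).val < (n / r) * r := by
  have h1 : i.val * r + k.val < (i.val + 1) * r := by
    simp [add_mul]
  exact lt_of_lt_of_le h1 (Nat.mul_le_mul_right _ (Nat.succ_le_of_lt i.isLt))

lemma assemble_Tmap (hr : 0 < r) (a : Fin (n / r) → Fin r → Fin 2) (i : Fin (n / r))
    (k : Fin r) : assemble r n hr a (Tmap r n i k) = a i k := by
  have h := Tmap_lt (n := n) i k
  have hdiv : ((Tmap r n i k).val) / r = i.val := by
    show (i.val * r + k.val) / r = i.val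
    rw [add_comm, Nat.add_mul_div_right _ _ hr, Nat.div_eq_of_lt k.isLt, zero_add]
  have hmod : ((Tmap r n i k).val) % r = k.val := by
    show (i.val * r + k.val) % r = k.val
    rw [add_comm, Nat.add_mul_mod_self_right, Nat.mod_eq_of_lt k.isLt]
  simp only [assemble]
  rw [dif_pos h]
  congr 1
  · exact Fin.ext hdiv
  · exact Fin.ext hmod

lemma Tmap_inj (i : Fin (n / r)) : Function.Injective (Tmap r n i) := by
  intro k k' h
  have : i.val * r + k.val = i.val * r + k'.val := congrArg Fin.val h
  exact Fin.ext (Nat.add_left_cancel this)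

lemma Tmap_eq_iff (hr : 0 < r) {i j : Fin (n / r)} {k l : Fin r}
    (h : Tmap r n i k = Tmap r n j l) : i = j ∧ k = l := by
  have hv : i.val * r + k.val = j.val * r + l.val := congrArg Fin.val h
  have hdiv : ∀ (i : ℕ) (k : Fin r), (i * r + k.val) / r = i := fun i k => by
    rw [add_comm, Nat.add_mul_div_right _ _ hr, Nat.div_eq_of_lt k.isLt, zero_add]
  have hij : i.val = j.val := by
    have := congrArg (· / r) hv
    simpa [hdiv] using this
  rw [← hij] at hv
  exact ⟨Fin.ext hij, Fin.ext (Nat.add_left_cancel hv)⟩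

lemma eq_Tmap_of_lt (hr : 0 < r) (q : Fin n) (h : q.val < (n / r) * r) :
    q = Tmap r n ⟨q.val / r, (Nat.div_lt_iff_lt_mul hr).2 h⟩ ⟨q.val % r, Nat.mod_lt _ hr⟩ :=
  Fin.ext (Nat.div_add_mod' q.val r).symm

/-- Any global string vanishing outside the blocks is an assembly. -/
lemma eq_assemble_of_support (hr : 0 < r) (x : Fin n → Fin 2)
    (hx : ∀ q : Fin n, ¬ q.val < (n / r) * r → x q = 0) :
    x = assemble r n hr (fun i k => x (Tmap r n i k)) := by
  funext q
  by_cases h : q.val < (n / r) * r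
  · simp only [assemble, dif_pos h]
    exact congrArg x (eq_Tmap_of_lt hr q h)
  · rw [hx q h]
    simp only [assemble, dif_neg h]

lemma assemble_injective (hr : 0 < r) : Function.Injective (assemble r n hr) := by
  intro a b hab
  funext i k
  have := congrFun hab (Tmap r n i k)
  rwa [assemble_Tmap hr, assemble_Tmap hr] at this

lemma assemble_not_lt (hr : 0 < r) (a : Fin (n / r) → Fin r → Fin 2) (q : Fin n)
    (h : ¬ q.val < (n / r) * r) : assemble r n hr a q = 0 := by
  simp only [assemble, dif_neg h]

end Aux

section Calc

variable {r : ℕ}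

/-- the product state built from block states `c`, zero outside assembled strings. -/
noncomputable def prodState (r n : ℕ) (c : Fin (n / r) → ((Fin r → Fin 2) → ℂ)) :
    (Fin n → Fin 2) → ℂ :=
  fun x =>
    if (∀ q : Fin n, ¬ q.val < (n / r) * r → x q = 0) then
      ∏ j : Fin (n / r), c j (fun k => x (Tmap r n j k))
    else 0

lemma prodState_assemble {n : ℕ} (hr : 0 < r) (c : Fin (n / r) → ((Fin r → Fin 2) → ℂ))
    (a : Fin (n / r) → Fin r → Fin 2) :
    prodState r n c (assemble r n hr a) = ∏ j, c j (a j) := by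
  rw [prodState, if_pos (fun q h => assemble_not_lt hr a q h)]
  refine Finset.prod_congr rfl fun j _ => ?_
  congr 1
  funext k
  rw [assemble_Tmap hr]

lemma prodState_eq_zero {n : ℕ} (hr : 0 < r) (c : Fin (n / r) → ((Fin r → Fin 2) → ℂ))
    (x : Fin n → Fin 2) (hx : ¬ ∃ a, assemble r n hr a = x) :
    prodState r n c x = 0 := by
  rw [prodState, if_neg]
  intro hsupp
  exact hx ⟨_, (eq_assemble_of_support hr x hsupp).symm⟩

/-- Reduce a sum over all bit strings to a sum over assemblies. -/
lemma sum_eq_sum_assemble {n : ℕ} (hr : 0 < r) (f : (Fin n → Fin 2) → ℂ)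
    (hf : ∀ x, (¬ ∃ a, assemble r n hr a = x) → f x = 0) :
    ∑ x, f x = ∑ a, f (assemble r n hr a) :=
  calc ∑ x, f x
      = ∑ x ∈ Finset.univ.image (assemble r n hr), f x :=
        (Finset.sum_subset (Finset.subset_univ _) (fun x _ hx =>
          hf x (fun ⟨a, ha⟩ => hx (Finset.mem_image.2 ⟨a, Finset.mem_univ _, ha⟩)))).symm
    _ = ∑ a, f (assemble r n hr a) :=
        Finset.sum_image (fun a _ b _ h => assemble_injective hr h)

end Calc

section MainCalc

variable {r n : ℕ}

lemma localOp_assemble (hr : 0 < r) (M : Matrix (Fin r → Fin 2) (Fin r → Fin 2) ℂ)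
    (a b : Fin (n / r) → Fin r → Fin 2) (k : Fin (n / r)) :
    localOp M (Tmap r n k) (assemble r n hr a) (assemble r n hr b)
      = if (∀ j, j ≠ k → a j = b j) then M (a k) (b k) else 0 := by
  have hcomp : ∀ c : Fin (n / r) → Fin r → Fin 2,
      (assemble r n hr c) ∘ (Tmap r n k) = c k := fun c =>
    funext fun l => assemble_Tmap hr c k l
  have hiff : (∀ q : Fin n, q ∉ Set.range (Tmap r n k) →
      assemble r n hr a q = assemble r n hr b q) ↔ (∀ j, j ≠ k → a j = b j) := by
    constructor
    · intro h j hj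
      funext l
      have hq : Tmap r n j l ∉ Set.range (Tmap r n k) := by
        rintro ⟨l', hl'⟩
        exact hj ((Tmap_eq_iff hr hl').1.symm)
      have := h _ hq
      rwa [assemble_Tmap hr, assemble_Tmap hr] at this
    · intro h q hq
      by_cases hlt : q.val < (n / r) * r
      · have hq' := eq_Tmap_of_lt hr q hlt
        have hjk : (⟨q.val / r, (Nat.div_lt_iff_lt_mul hr).2 hlt⟩ : Fin (n / r)) ≠ k := by
          intro he
          exact hq ⟨_, by rw [hq', he]⟩
        rw [hq', assemble_Tmap hr, assemble_Tmap hr, h _ hjk]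
      · rw [assemble_not_lt hr a q hlt, assemble_not_lt hr b q hlt]
  simp only [localOp, Matrix.of_apply, hcomp, hiff]

lemma sum_update {m : ℕ} {V : Type*} [Fintype V] [DecidableEq V] (k : Fin m) (a : Fin m → V)
    (F : (Fin m → V) → ℂ) :
    ∑ b : Fin m → V, (if (∀ j, j ≠ k → a j = b j) then F b else 0)
      = ∑ v : V, F (Function.update a k v) := by
  rw [← Finset.sum_filter]
  have himg : Finset.univ.filter (fun b : Fin m → V => ∀ j, j ≠ k → a j = b j)
      = Finset.univ.image (Function.update a k) := by
    ext b
    simp only [Finset.mem_filter, Finset.mem_image, Finset.mem_univ, true_and]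
    constructor
    · intro h
      refine ⟨b k, funext fun j => ?_⟩
      by_cases hj : j = k
      · subst hj; simp
      · simp [Function.update_of_ne hj, (h j hj).symm]
    · rintro ⟨v, rfl⟩ j hj
      rw [Function.update_of_ne hj]
  rw [himg, Finset.sum_image (fun v _ w _ h => by simpa using congrFun h k)]

lemma prod_update_aux {ι V : Type*} [Fintype ι] [DecidableEq ι] (c : ι → V → ℂ)
    (a : ι → V) (k : ι) (v : V) :
    ∏ j, c j (Function.update a k v j)
      = c k v * ∏ j ∈ Finset.univ.erase k, c j (a j) := by
  rw [← Finset.mul_prod_erase Finset.univ (fun j => c j (Function.update a k v j))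
    (Finset.mem_univ k), Function.update_self]
  congr 1
  exact Finset.prod_congr rfl fun j hj => by
    rw [Function.update_of_ne (Finset.ne_of_mem_erase hj)]

lemma sum_prod_pi {m : ℕ} {V : Type*} [Fintype V] [DecidableEq V] (Q : Fin m → V → ℂ) :
    ∑ a : Fin m → V, ∏ j, Q j (a j) = ∏ j, ∑ u, Q j u := by
  classical
  rw [Finset.prod_univ_sum, Fintype.piFinset_univ]

lemma dot_self_prodState (hr : 0 < r) (c : Fin (n / r) → ((Fin r → Fin 2) → ℂ)) :
    star (prodState r n c) ⬝ᵥ prodState r n c = ∏ j, star (c j) ⬝ᵥ c j := by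
  classical
  rw [dotProduct]
  rw [sum_eq_sum_assemble hr _ (fun x hx => by
    rw [Pi.star_apply, prodState_eq_zero hr c x hx, star_zero, zero_mul])]
  have : ∀ a : Fin (n / r) → Fin r → Fin 2,
      star (prodState r n c) (assemble r n hr a) * prodState r n c (assemble r n hr a)
        = ∏ j, (star (c j (a j)) * c j (a j)) := by
    intro a
    rw [Pi.star_apply, prodState_assemble hr, star_prod, ← Finset.prod_mul_distrib]
  rw [Finset.sum_congr rfl fun a _ => this a,
    sum_prod_pi (fun j u => star (c j u) * c j u)]
  exact Finset.prod_congr rfl fun j _ => by simp [dotProduct]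

lemma dot_localOp_prodState (hr : 0 < r) (M : Matrix (Fin r → Fin 2) (Fin r → Fin 2) ℂ)
    (c : Fin (n / r) → ((Fin r → Fin 2) → ℂ)) (k : Fin (n / r)) :
    star (prodState r n c) ⬝ᵥ (localOp M (Tmap r n k)).mulVec (prodState r n c)
      = (star (c k) ⬝ᵥ M.mulVec (c k)) * ∏ j ∈ Finset.univ.erase k, (star (c j) ⬝ᵥ c j) := by
  classical
  set ψ := prodState r n c with hψ
  have hz : ∀ x, (¬ ∃ a, assemble r n hr a = x) → ψ x = 0 := fun x hx =>
    prodState_eq_zero hr c x hx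
  set Q : Fin (n / r) → (Fin r → Fin 2) → ℂ := fun j u =>
    if j = k then star (c k u) * ∑ v, M u v * c k v else star (c j u) * c j u with hQ
  have step1 : ∀ a, (localOp M (Tmap r n k)).mulVec ψ (assemble r n hr a)
      = (∑ v, M (a k) v * c k v) * ∏ j ∈ Finset.univ.erase k, c j (a j) := by
    intro a
    calc (localOp M (Tmap r n k)).mulVec ψ (assemble r n hr a)
        = ∑ y, localOp M (Tmap r n k) (assemble r n hr a) y * ψ y := by
          simp [Matrix.mulVec, dotProduct]
      _ = ∑ b, localOp M (Tmap r n k) (assemble r n hr a) (assemble r n hr b)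
            * ψ (assemble r n hr b) :=
          sum_eq_sum_assemble hr _ (fun y hy => by rw [hz y hy, mul_zero])
      _ = ∑ b : Fin (n / r) → Fin r → Fin 2,
            (if (∀ j, j ≠ k → a j = b j) then M (a k) (b k) * ∏ j, c j (b j) else 0) := by
          refine Finset.sum_congr rfl fun b _ => ?_
          rw [localOp_assemble hr M a b k, hψ, prodState_assemble hr]
          split <;> simp
      _ = ∑ v, M (a k) ((Function.update a k v) k) * ∏ j, c j (Function.update a k v j) :=
          sum_update k a _
      _ = (∑ v, M (a k) v * c k v) * ∏ j ∈ Finset.univ.erase k, c j (a j) := by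
          rw [Finset.sum_mul]
          refine Finset.sum_congr rfl fun v _ => ?_
          rw [Function.update_self, prod_update_aux, mul_assoc]
  rw [dotProduct]
  rw [sum_eq_sum_assemble hr _ (fun x hx => by
    rw [Pi.star_apply, hz x hx, star_zero, zero_mul])]
  have expand : ∀ a : Fin (n / r) → Fin r → Fin 2,
      star ψ (assemble r n hr a) * (localOp M (Tmap r n k)).mulVec ψ (assemble r n hr a)
        = ∏ j, Q j (a j) := by
    intro a
    rw [Pi.star_apply, hψ, prodState_assemble hr, step1 a]
    have h1 : (star (∏ j, c j (a j)) : ℂ)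
        = star (c k (a k)) * ∏ j ∈ Finset.univ.erase k, star (c j (a j)) := by
      rw [← Finset.mul_prod_erase Finset.univ (fun j => c j (a j)) (Finset.mem_univ k),
        star_mul', star_prod]
    have h2 : ∏ j, Q j (a j)
        = (star (c k (a k)) * ∑ v, M (a k) v * c k v)
          * ∏ j ∈ Finset.univ.erase k, (star (c j (a j)) * c j (a j)) := by
      rw [← Finset.mul_prod_erase Finset.univ (fun j => Q j (a j)) (Finset.mem_univ k)]
      congr 1
      · simp [hQ]
      · exact Finset.prod_congr rfl fun j hj => by
          simp [hQ, Finset.ne_of_mem_erase hj]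
    rw [h2, Finset.prod_mul_distrib, h1]
    ring
  rw [Finset.sum_congr rfl fun a _ => expand a, sum_prod_pi]
  rw [← Finset.mul_prod_erase Finset.univ (fun j => ∑ u, Q j u) (Finset.mem_univ k)]
  congr 1
  · simp only [hQ, if_pos rfl]
    simp [dotProduct, Matrix.mulVec, Finset.mul_sum]
  · refine Finset.prod_congr rfl fun j hj => ?_
    simp [hQ, Finset.ne_of_mem_erase hj, dotProduct]

end MainCalc

section Vectors

variable {ι : Type*} [Fintype ι] [DecidableEq ι]

lemma dot_star_self (v : ι → ℂ) :
    star v ⬝ᵥ v = ((∑ a, Complex.normSq (v a) : ℝ) : ℂ) := by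
  simp [dotProduct, Complex.normSq_eq_conj_mul_self, Complex.star_def]

lemma sum_normSq_pos (v : ι → ℂ) (hv : v ≠ 0) :
    0 < ∑ a, Complex.normSq (v a) := by
  obtain ⟨a, ha⟩ : ∃ a, v a ≠ 0 := by
    by_contra h
    push_neg at h
    exact hv (funext h)
  refine Finset.sum_pos' (fun b _ => Complex.normSq_nonneg _) ⟨a, Finset.mem_univ _, ?_⟩
  exact Complex.normSq_pos.2 ha

/-- Normalize a nonzero vector. -/
lemma exists_unit_smul (v : ι → ℂ) (hv : v ≠ 0) :
    ∃ t : ℝ, 0 < t ∧ star ((t : ℂ) • v) ⬝ᵥ ((t : ℂ) • v) = 1 := by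
  have hS := sum_normSq_pos v hv
  refine ⟨(Real.sqrt (∑ a, Complex.normSq (v a)))⁻¹,
    inv_pos.2 (Real.sqrt_pos.2 hS), ?_⟩
  set S := ∑ a, Complex.normSq (v a) with hSdef
  have hmain : (S : ℝ)⁻¹.sqrt⁻¹ = 0 ∨ True := Or.inr trivial
  simp only [star_smul, smul_dotProduct, dotProduct_smul, dot_star_self v, smul_eq_mul,
    Complex.star_def, Complex.conj_ofReal]
  have h1 : (Real.sqrt S)⁻¹ * ((Real.sqrt S)⁻¹ * S) = 1 := by
    rw [← mul_assoc, ← mul_inv, Real.mul_self_sqrt hS.le, inv_mul_cancel₀ (ne_of_gt hS)]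
  calc (((Real.sqrt S)⁻¹ : ℝ) : ℂ) * ((((Real.sqrt S)⁻¹ : ℝ) : ℂ) * (S : ℂ))
      = (((Real.sqrt S)⁻¹ * ((Real.sqrt S)⁻¹ * S) : ℝ) : ℂ) := by push_cast; ring
    _ = 1 := by rw [h1, Complex.ofReal_one]

lemma exists_pos_vec {d : Type*} [Fintype d] [DecidableEq d]
    (M : Matrix d d ℂ) (hPSD : M.PosSemidef) (hne : M ≠ 0) :
    ∃ v : d → ℂ, star v ⬝ᵥ v = 1 ∧ 0 < (star v ⬝ᵥ M.mulVec v).re := by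
  obtain ⟨B, hB'⟩ : ∃ B : Matrix d d ℂ, M = star B * B := by
    open scoped MatrixOrder in
    exact CStarAlgebra.nonneg_iff_eq_star_mul_self.mp hPSD.nonneg
  have hB : M = Bᴴ * B := hB'
  have hBne : B ≠ 0 := fun h => hne (by rw [hB, h]; simp)
  obtain ⟨i0, j0, hij⟩ : ∃ i j, B i j ≠ 0 := by
    by_contra h
    push_neg at h
    exact hBne (Matrix.ext fun i j => h i j)
  set u : d → ℂ := Pi.single j0 (1 : ℂ) with hu
  have hBu : B.mulVec u ≠ 0 := by
    intro h
    apply hij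
    have := congrFun h i0
    simpa [hu, Matrix.mulVec_single] using this
  have key : ∀ z : d → ℂ, star z ⬝ᵥ M.mulVec z = star (B.mulVec z) ⬝ᵥ (B.mulVec z) := by
    intro z
    rw [hB, ← Matrix.mulVec_mulVec, Matrix.dotProduct_mulVec, ← Matrix.star_mulVec]
  have hune : u ≠ 0 := by
    intro h
    have := congrFun h j0
    simp [hu] at this
  obtain ⟨t, ht, htu⟩ := exists_unit_smul u hune
  refine ⟨(t : ℂ) • u, htu, ?_⟩
  rw [key, Matrix.mulVec_smul, dot_star_self]
  have hBtu : (t : ℂ) • B.mulVec u ≠ 0 := by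
    intro h
    apply hBu
    funext a
    have := congrFun h a
    simp only [Pi.smul_apply, smul_eq_mul, Pi.zero_apply] at this ⊢
    have ht' : (t : ℂ) ≠ 0 := by
      simpa using ne_of_gt ht
    exact (mul_eq_zero.mp this).resolve_left ht'
  have := sum_normSq_pos _ hBtu
  simpa using this

lemma exists_ker_vec {d : Type*} [Fintype d] [DecidableEq d]
    (M : Matrix d d ℂ) (hrank : M.rank < Fintype.card d) :
    ∃ w : d → ℂ, star w ⬝ᵥ w = 1 ∧ M.mulVec w = 0 := by
  have hker : LinearMap.ker M.mulVecLin ≠ ⊥ := by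
    intro hk
    have hinj : Function.Injective M.mulVecLin := LinearMap.ker_eq_bot.mp hk
    have h1 := LinearMap.finrank_range_of_inj hinj
    have h2 : M.rank = Fintype.card d := by
      rw [Matrix.rank, h1]
      simp [Module.finrank_pi]
    omega
  obtain ⟨w, hwker, hwne⟩ := Submodule.exists_mem_ne_zero_of_ne_bot hker
  have hw0 : M.mulVec w = 0 := by
    have := LinearMap.mem_ker.mp hwker
    simpa [Matrix.mulVecLin_apply] using this
  obtain ⟨t, ht, htu⟩ := exists_unit_smul w hwne
  exact ⟨(t : ℂ) • w, htu, by rw [Matrix.mulVec_smul, hw0, smul_zero]⟩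

end Vectors

/-- If `M` is a nonzero PSD predicate matrix on `r` qubits that is not of
full rank, then there are `⌊n/r⌋` pairwise disjoint `r`-tuples `T_1, …, T_m` of qubits
and unit states `ψ_1, …, ψ_m ∈ ℂ^{2^n}` with `⟨ψ_i, M_{T_i} ψ_i⟩ > 0` and
`⟨ψ_i, M_{T_j} ψ_i⟩ = 0` for `j ≠ i`.  (Hence `NRD(M, n) ≥ ⌊n/r⌋`.) -/
theorem stmt2 (r n : ℕ) (hr : 1 ≤ r)
    (M : Matrix (Fin r → Fin 2) (Fin r → Fin 2) ℂ)
    (hPSD : M.PosSemidef) (hne : M ≠ 0)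
    (hrank : M.rank < Fintype.card (Fin r → Fin 2)) :
    ∃ T : Fin (n / r) → (Fin r → Fin n),
      (∀ i, Function.Injective (T i)) ∧
      (∀ i j, i ≠ j → Disjoint (Set.range (T i)) (Set.range (T j))) ∧
      ∃ ψ : Fin (n / r) → ((Fin n → Fin 2) → ℂ),
        ∀ i,
          (star (ψ i) ⬝ᵥ ψ i) = 1 ∧
          0 < (star (ψ i) ⬝ᵥ (localOp M (T i)).mulVec (ψ i)).re ∧
          ∀ j, j ≠ i → star (ψ i) ⬝ᵥ (localOp M (T j)).mulVec (ψ i) = 0 := by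
  have hr' : 0 < r := hr
  obtain ⟨v, hv1, hv2⟩ := exists_pos_vec M hPSD hne
  obtain ⟨w, hw1, hw2⟩ := exists_ker_vec M hrank
  refine ⟨Tmap r n, fun i => Tmap_inj i, ?_, ?_⟩
  · intro i j hij
    rw [Set.disjoint_left]
    rintro q ⟨k, rfl⟩ ⟨l, hl⟩
    exact hij ((Tmap_eq_iff hr' hl).1.symm)
  · set c : Fin (n / r) → Fin (n / r) → ((Fin r → Fin 2) → ℂ) :=
      fun i j => if j = i then v else w with hc
    refine ⟨fun i => prodState r n (c i), fun i => ⟨?_, ?_, ?_⟩⟩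
    · rw [dot_self_prodState hr']
      refine Finset.prod_eq_one fun j _ => ?_
      by_cases h : j = i <;> simp [hc, h, hv1, hw1]
    · rw [dot_localOp_prodState hr']
      have h1 : c i i = v := if_pos rfl
      have h2 : ∏ j ∈ Finset.univ.erase i, star (c i j) ⬝ᵥ c i j = 1 :=
        Finset.prod_eq_one fun j hj => by
          simp [hc, Finset.ne_of_mem_erase hj, hw1]
      rw [h1, h2, mul_one]
      exact hv2
    · intro j hj
      rw [dot_localOp_prodState hr']
      have h1 : c i j = w := if_neg hj
      rw [h1, hw2]
      simp
end

section
/- Let M_1, …, M_r ∈ ℂ^{2×2} be nonzero positive semidefinite matrices, each of rank 1 (equivalently nonzero and not full rank), and let M = M_1 ⊗ ⋯ ⊗ M_r ∈ ℂ^{2^r × 2^r}. Let H be any r-partite r-uniform hypergraph on parts V_1,…,V_r. Then for every hyperedge T ∈ H there exists a product state ψ_T ∈ (ℂ^2)^{⊗n} such that ⟨ψ_T, M_T ψ_T⟩ > 0 while ⟨ψ_T, M_{T'} ψ_T⟩ = 0 for every other hyperedge T' ∈ H, where M_T denotes M applied to the qubits of T (with M_i acting on the qubit of T in part V_i) tensored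 with identity elsewhere. -/
open scoped Classical ComplexOrder
open Matrix

/-- The local operator `(M 0 ⊗ ⋯ ⊗ M (r-1))|_T ⊗ Id` on qubits indexed by `V`:
`M k` acts on qubit `T k` and the identity acts elsewhere. -/
noncomputable def locOpParts {V : Type*} [Fintype V] [DecidableEq V] {r : ℕ}
    (M : Fin r → Matrix (Fin 2) (Fin 2) ℂ) (T : Fin r → V) :
    Matrix (V → Fin 2) (V → Fin 2) ℂ :=
  Matrix.of fun x y =>
    if ∀ v : V, v ∉ Set.range T → x v = y v then
      ∏ k : Fin r, M k (x (T k)) (y (T k))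
    else 0

/-- Factorization of the quadratic form of `locOpParts` on a product vector. -/
private lemma quad_factor {V : Type*} [Fintype V] [DecidableEq V] {r : ℕ}
    (M : Fin r → Matrix (Fin 2) (Fin 2) ℂ) (T : Fin r → V) (p : V → Fin r)
    (hp : ∀ k, p (T k) = k) (φ : V → Fin 2 → ℂ) :
    star (fun x : V → Fin 2 => ∏ v, φ v (x v)) ⬝ᵥ
      (locOpParts M T).mulVec (fun x : V → Fin 2 => ∏ v, φ v (x v)) =
    ∏ v, star (φ v) ⬝ᵥ
      ((if v ∈ Set.range T then M (p v) else 1).mulVec (φ v)) := by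
  have hTinj : Function.Injective T := Function.LeftInverse.injective hp
  set B : V → Matrix (Fin 2) (Fin 2) ℂ :=
    fun v => if v ∈ Set.range T then M (p v) else 1 with hB
  have hA : ∀ x y : V → Fin 2,
      locOpParts M T x y = ∏ v, B v (x v) (y v) := by
    intro x y
    rw [locOpParts, Matrix.of_apply]
    by_cases h : ∀ v, v ∉ Set.range T → x v = y v
    · rw [if_pos h,
        ← Finset.prod_filter_mul_prod_filter_not Finset.univ (· ∈ Set.range T)]
      have h2 : ∏ v ∈ Finset.univ.filter (fun v => ¬ v ∈ Set.range T),
          B v (x v) (y v) = 1 := by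
        refine Finset.prod_eq_one fun v hv => ?_
        rw [Finset.mem_filter] at hv
        simp only [hB, if_neg hv.2]
        rw [h v hv.2, Matrix.one_apply_eq]
      rw [h2, mul_one]
      have h3 : Finset.univ.filter (fun v => v ∈ Set.range T)
          = Finset.univ.image T := by
        ext v; simp [Set.mem_range, eq_comm]
      rw [h3, Finset.prod_image (fun a _ b _ hab => hTinj hab)]
      refine Finset.prod_congr rfl fun k _ => ?_
      simp [hB, hp k]
    · rw [if_neg h]
      push_neg at h
      obtain ⟨v₀, hv₀, hxy⟩ := h
      refine (Finset.prod_eq_zero (Finset.mem_univ v₀) ?_).symm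
      simp only [hB, if_neg hv₀]
      exact Matrix.one_apply_ne hxy
  have key : ∀ v : V, star (φ v) ⬝ᵥ (B v).mulVec (φ v)
      = ∑ a, ∑ b, star (φ v a) * (B v a b * φ v b) := by
    intro v
    simp only [dotProduct, mulVec, Pi.star_apply, Finset.mul_sum]
  calc star (fun x : V → Fin 2 => ∏ v, φ v (x v)) ⬝ᵥ
      (locOpParts M T).mulVec (fun x : V → Fin 2 => ∏ v, φ v (x v))
      = ∑ x : V → Fin 2, ∑ y : V → Fin 2,
          ∏ v, (star (φ v (x v)) * (B v (x v) (y v) * φ v (y v))) := by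
        simp only [dotProduct, mulVec, Pi.star_apply, hA, star_prod]
        refine Finset.sum_congr rfl fun x _ => ?_
        rw [Finset.mul_sum]
        refine Finset.sum_congr rfl fun y _ => ?_
        simp only [Finset.prod_mul_distrib]
    _ = ∑ x : V → Fin 2, ∏ v, ∑ b, (star (φ v (x v)) * (B v (x v) b * φ v b)) := by
        refine Finset.sum_congr rfl fun x _ => ?_
        rw [Fintype.prod_sum]
    _ = ∏ v, ∑ a, ∑ b, star (φ v a) * (B v a b * φ v b) := by
        rw [Fintype.prod_sum]
    _ = ∏ v, star (φ v) ⬝ᵥ (B v).mulVec (φ v) := by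
        refine Finset.prod_congr rfl fun v _ => (key v).symm

/-- A nonzero `2×2` PSD matrix has a positive diagonal entry. -/
private lemma exists_diag_pos (A : Matrix (Fin 2) (Fin 2) ℂ)
    (hA : A.PosSemidef) (h0 : A ≠ 0) : ∃ i, 0 < A i i := by
  by_contra hc
  push_neg at hc
  have hdnn : ∀ i, 0 ≤ A i i := by
    intro i
    have := hA.dotProduct_mulVec_nonneg (Pi.single i 1)
    simpa [dotProduct, mulVec, Pi.single_apply, Finset.mul_sum] using this
  have hd : ∀ i, A i i = 0 := by
    intro i
    rcases (hdnn i).lt_or_eq with h | h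
    · exact absurd h (hc i)
    · exact h.symm
  have herm := hA.1
  have h10 : A 1 0 = starRingEnd ℂ (A 0 1) := by
    have := congrFun (congrFun herm 1) 0
    simpa [Matrix.conjTranspose_apply] using this.symm
  set a := A 0 1 with ha
  have hq := hA.dotProduct_mulVec_nonneg ![1, -(starRingEnd ℂ a)]
  have hval : star ![1, -(starRingEnd ℂ a)] ⬝ᵥ
      A.mulVec ![1, -(starRingEnd ℂ a)] = ((-(2 * Complex.normSq a) : ℝ) : ℂ) := by
    have hm := Complex.mul_conj a
    simp only [dotProduct, mulVec, Fin.sum_univ_two, Pi.star_apply,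
      Matrix.cons_val_zero, Matrix.cons_val_one, Matrix.head_cons, hd, h10,
      star_one, star_neg, Complex.star_def, Complex.conj_conj]
    push_cast
    simp only [_root_.map_one, map_neg, Complex.conj_conj, ← ha]
    linear_combination (-2 : ℂ) * hm
  rw [hval] at hq
  have hq' : (0:ℝ) ≤ -(2 * Complex.normSq a) := by
    exact_mod_cast hq
  have ha0 : a = 0 := by
    have : Complex.normSq a ≤ 0 := by linarith
    have := le_antisymm this (Complex.normSq_nonneg a)
    exact Complex.normSq_eq_zero.mp this
  apply h0
  ext i j
  fin_cases i <;> fin_cases j <;>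
    simp [hd 0, hd 1, ha0, h10, ← ha]

/-- A `2×2` matrix of rank one has a nonzero kernel vector. -/
private lemma exists_ker (A : Matrix (Fin 2) (Fin 2) ℂ) (hr : A.rank = 1) :
    ∃ w : Fin 2 → ℂ, w ≠ 0 ∧ A.mulVec w = 0 := by
  have hdet : A.det = 0 := by
    by_contra hdet
    have hu : IsUnit A := (Matrix.isUnit_iff_isUnit_det A).mpr (isUnit_iff_ne_zero.mpr hdet)
    have := Matrix.rank_of_isUnit A hu
    rw [hr] at this
    simp at this
  obtain ⟨w, hw0, hw⟩ := Matrix.exists_mulVec_eq_zero_iff.mpr hdet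
  exact ⟨w, hw0, hw⟩

/-- For `M = M_1 ⊗ ⋯ ⊗ M_r` with each `M_i ∈ ℂ^{2×2}` nonzero PSD of
rank 1, and `H` an r-partite r-uniform hypergraph (partition recorded by `p : V → Fin r`
with `p (T k) = k` for every hyperedge `T ∈ H`), every hyperedge `T ∈ H` has a product
state `ψ_T = ⊗_v φ_v` with `⟨ψ_T, M_T ψ_T⟩ > 0` and `⟨ψ_T, M_{T'} ψ_T⟩ = 0` for all
other `T' ∈ H`. -/
theorem stmt3 {V : Type*} [Fintype V] [DecidableEq V] (r : ℕ)
    (M : Fin r → Matrix (Fin 2) (Fin 2) ℂ)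
    (hPSD : ∀ k, (M k).PosSemidef) (hne : ∀ k, M k ≠ 0) (hrk : ∀ k, (M k).rank = 1)
    (p : V → Fin r) (H : Finset (Fin r → V)) (hpart : ∀ T ∈ H, ∀ k, p (T k) = k) :
    ∀ T ∈ H, ∃ φ : V → (Fin 2 → ℂ),
      0 < (star (fun x : V → Fin 2 => ∏ v, φ v (x v)) ⬝ᵥ
            (locOpParts M T).mulVec (fun x : V → Fin 2 => ∏ v, φ v (x v))).re ∧
      ∀ T' ∈ H, T' ≠ T →
        star (fun x : V → Fin 2 => ∏ v, φ v (x v)) ⬝ᵥ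
          (locOpParts M T').mulVec (fun x : V → Fin 2 => ∏ v, φ v (x v)) = 0 := by
  intro T hT
  choose i hi using fun k => exists_diag_pos _ (hPSD k) (hne k)
  choose π hπ0 hπk using fun k => exists_ker (M k) (hrk k)
  set φ : V → Fin 2 → ℂ :=
    fun v => if v ∈ Set.range T then Pi.single (i (p v)) 1 else π (p v) with hφ
  refine ⟨φ, ?_, ?_⟩
  · rw [quad_factor M T p (hpart T hT)]
    have hpos : ∀ v : V,
        0 < star (φ v) ⬝ᵥ ((if v ∈ Set.range T then M (p v) else 1).mulVec (φ v)) := by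
      intro v
      by_cases hv : v ∈ Set.range T
      · simp only [hφ, if_pos hv]
        have hval : star (Pi.single (i (p v)) (1:ℂ)) ⬝ᵥ
            (M (p v)).mulVec (Pi.single (i (p v)) 1)
            = M (p v) (i (p v)) (i (p v)) := by
          simp [dotProduct, mulVec, Pi.single_apply, Finset.mul_sum]
        rw [hval]
        exact hi (p v)
      · simp only [hφ, if_neg hv, Matrix.one_mulVec]
        exact dotProduct_star_self_pos_iff.mpr (hπ0 (p v))
    have hpp := Finset.prod_pos (fun v (_ : v ∈ Finset.univ) => hpos v)
    rw [Complex.lt_def] at hpp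
    simpa using hpp.1
  · intro T' hT' hne'
    rw [quad_factor M T' p (hpart T' hT')]
    have hex : ∃ k, T' k ≠ T k := by
      by_contra hc
      push_neg at hc
      exact hne' (funext hc)
    obtain ⟨k, hk⟩ := hex
    have hv₀ : T' k ∉ Set.range T := by
      rintro ⟨j, hj⟩
      apply hk
      have h1 : p (T' k) = k := hpart T' hT' k
      have h2 : p (T j) = j := hpart T hT j
      have hjk : j = k := by rw [← h2, hj, h1]
      rw [← hj, hjk]
    refine Finset.prod_eq_zero (Finset.mem_univ (T' k)) ?_
    have hmem : T' k ∈ Set.range T' := ⟨k, rfl⟩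
    simp only [hφ, if_pos hmem, if_neg hv₀]
    rw [hpart T' hT' k, hπk k, dotProduct_zero]
end

section
/- Let M = M_1 ⊗ ⋯ ⊗ M_r where each M_i ∈ ℂ^{2×2} is a nonzero PSD matrix of rank 1. Then for all ε ∈ (0,1), every ε-sparsifier of the complete r-partite M-Hamiltonian on parts of size ⌊n/r⌋ must have full support, and hence SPR(M, n, ε) ≥ ⌊n/r⌋^r. -/
open scoped Classical ComplexOrder
open Matrix

/-- `star u ⬝ᵥ u` is the (real) sum of squared norms. -/
lemma star_dot_self_eq {n : Type*} [Fintype n] (u : n → ℂ) :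
    star u ⬝ᵥ u = ((∑ i, Complex.normSq (u i) : ℝ) : ℂ) := by
  rw [Complex.ofReal_sum]
  simp only [dotProduct, Pi.star_apply, RCLike.star_def]
  exact Finset.sum_congr rfl fun i _ => (Complex.normSq_eq_conj_mul_self).symm

lemma sum_normSq_pos_s4 {n : Type*} [Fintype n] {u : n → ℂ} (hu : u ≠ 0) :
    0 < ∑ i, Complex.normSq (u i) := by
  obtain ⟨i, hi⟩ : ∃ i, u i ≠ 0 := by
    by_contra h; push_neg at h; exact hu (funext h)
  refine Finset.sum_pos' (fun j _ => Complex.normSq_nonneg _) ⟨i, Finset.mem_univ i, ?_⟩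
  exact Complex.normSq_pos.mpr hi

/-- A nonzero PSD matrix has a vector with strictly positive quadratic form. -/
lemma exists_quad_pos {A : Matrix (Fin 2) (Fin 2) ℂ} (hA : A.PosSemidef) (hne : A ≠ 0) :
    ∃ v : Fin 2 → ℂ, ∃ t : ℝ, 0 < t ∧ star v ⬝ᵥ A *ᵥ v = (t : ℂ) := by
  obtain ⟨B, hBA⟩ : ∃ B : Matrix (Fin 2) (Fin 2) ℂ, A = star B * B := by
    open scoped MatrixOrder in exact CStarAlgebra.nonneg_iff_eq_star_mul_self.mp hA.nonneg
  rw [star_eq_conjTranspose] at hBA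
  subst hBA
  have hB : B ≠ 0 := by rintro rfl; simp at hne
  obtain ⟨i, j, hij⟩ : ∃ i j, B i j ≠ 0 := by
    by_contra h; push_neg at h
    exact hB (by ext i j; simp [h])
  set u : Fin 2 → ℂ := B *ᵥ Pi.single j 1 with hu_def
  have hui : u i = B i j := by
    simp [hu_def, mulVec, dotProduct, Pi.single_apply]
  have hu : u ≠ 0 := by
    intro h
    apply hij
    rw [← hui, h, Pi.zero_apply]
  have hquad : star (Pi.single j 1) ⬝ᵥ (Bᴴ * B) *ᵥ (Pi.single j 1) = star u ⬝ᵥ u := by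
    rw [← mulVec_mulVec, dotProduct_mulVec, ← star_mulVec]
  refine ⟨Pi.single j 1, ∑ i, Complex.normSq (u i), sum_normSq_pos_s4 hu, ?_⟩
  rw [hquad, star_dot_self_eq]

/-- A 2×2 matrix of rank 1 has a nonzero kernel vector. -/
lemma exists_kernel_vec {A : Matrix (Fin 2) (Fin 2) ℂ} (hrk : A.rank = 1) :
    ∃ u : Fin 2 → ℂ, u ≠ 0 ∧ A *ᵥ u = 0 := by
  have hdet : A.det = 0 := by
    by_contra h
    have : IsUnit A := (Matrix.isUnit_iff_isUnit_det A).mpr (isUnit_iff_ne_zero.mpr h)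
    have := Matrix.rank_of_isUnit A this
    rw [hrk] at this
    simp at this
  obtain ⟨v, hv, hAv⟩ := Matrix.exists_mulVec_eq_zero_iff.mpr hdet
  exact ⟨v, hv, hAv⟩

set_option maxHeartbeats 1000000 in
/-- Factorization of the quadratic form of `locOpParts` on a product state. -/
lemma locOpParts_quad {r m : ℕ} (M : Fin r → Matrix (Fin 2) (Fin 2) ℂ) (g : Fin r → Fin m)
    (φ : Fin r × Fin m → Fin 2 → ℂ) :
    (star (fun x : Fin r × Fin m → Fin 2 => ∏ p, φ p (x p))) ⬝ᵥ
      (locOpParts M (fun k => (k, g k))).mulVec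
        (fun x : Fin r × Fin m → Fin 2 => ∏ p, φ p (x p)) =
    ∏ p : Fin r × Fin m,
      (if p.2 = g p.1 then star (φ p) ⬝ᵥ (M p.1) *ᵥ (φ p) else star (φ p) ⬝ᵥ (φ p)) := by
  classical
  have hrange : ∀ v : Fin r × Fin m, v ∉ Set.range (fun k => ((k, g k) : Fin r × Fin m)) ↔ v.2 ≠ g v.1 := by
    intro v
    constructor
    · intro hv h
      exact hv ⟨v.1, by rw [Prod.ext_iff]; exact ⟨rfl, h.symm⟩⟩
    · rintro h ⟨k, rfl⟩; exact h rfl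
  set H : Fin r × Fin m → Fin 2 × Fin 2 → ℂ := fun p c =>
    (starRingEnd ℂ) (φ p c.1) *
      ((if p.2 = g p.1 then M p.1 c.1 c.2 else if c.1 = c.2 then 1 else 0) * φ p c.2) with hH
  have hA : ∀ x y : Fin r × Fin m → Fin 2, locOpParts M (fun k => ((k, g k) : Fin r × Fin m)) x y
      = ∏ p : Fin r × Fin m, (if p.2 = g p.1 then M p.1 (x p) (y p) else if x p = y p then (1:ℂ) else 0) := by
    intro x y
    simp only [locOpParts, Matrix.of_apply]
    by_cases hc : ∀ v : Fin r × Fin m, v ∉ Set.range (fun k => ((k, g k): Fin r × Fin m)) → x v = y v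
    · rw [if_pos hc]
      have h1 : ∀ p : Fin r × Fin m, (if p.2 = g p.1 then M p.1 (x p) (y p) else if x p = y p then (1:ℂ) else 0)
          = if p.2 = g p.1 then M p.1 (x p) (y p) else 1 := by
        intro p
        by_cases hp : p.2 = g p.1
        · simp [hp]
        · have := hc p ((hrange p).mpr hp)
          simp [hp, this]
      rw [Finset.prod_congr rfl (fun p _ => h1 p), Fintype.prod_prod_type]
      exact Finset.prod_congr rfl fun k _ => by simp
    · rw [if_neg hc]
      push_neg at hc
      obtain ⟨v, hv1, hv2⟩ := hc
      refine (Finset.prod_eq_zero (Finset.mem_univ v) ?_).symm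
      have hv3 := (hrange v).mp hv1
      simp [hv3, hv2]
  have hentry : ∀ x y : Fin r × Fin m → Fin 2,
      (starRingEnd ℂ) (∏ p, φ p (x p)) *
          (locOpParts M (fun k => ((k, g k): Fin r × Fin m)) x y * ∏ p, φ p (y p))
        = ∏ p, H p (x p, y p) := by
    intro x y
    rw [hA x y, hH]
    simp only
    rw [map_prod, ← Finset.prod_mul_distrib, ← Finset.prod_mul_distrib]
  calc (star (fun x : Fin r × Fin m → Fin 2 => ∏ p, φ p (x p))) ⬝ᵥ
      (locOpParts M (fun k => ((k, g k): Fin r × Fin m))).mulVec (fun x : Fin r × Fin m → Fin 2 => ∏ p, φ p (x p))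
      = ∑ x : Fin r × Fin m → Fin 2, ∑ y : Fin r × Fin m → Fin 2, (starRingEnd ℂ) (∏ p, φ p (x p)) *
          (locOpParts M (fun k => ((k, g k): Fin r × Fin m)) x y * ∏ p, φ p (y p)) := by
        simp only [dotProduct, mulVec, Pi.star_apply, RCLike.star_def, Finset.mul_sum]
    _ = ∑ x : Fin r × Fin m → Fin 2, ∑ y : Fin r × Fin m → Fin 2, ∏ p, H p (x p, y p) := by
        exact Finset.sum_congr rfl fun x _ => Finset.sum_congr rfl fun y _ => hentry x y
    _ = ∑ xy : (Fin r × Fin m → Fin 2) × (Fin r × Fin m → Fin 2),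
          ∏ p, H p (xy.1 p, xy.2 p) :=
        (Fintype.sum_prod_type (f := fun xy : (Fin r × Fin m → Fin 2) × (Fin r × Fin m → Fin 2) =>
          ∏ p, H p (xy.1 p, xy.2 p))).symm
    _ = ∑ q : Fin r × Fin m → Fin 2 × Fin 2, ∏ p, H p (q p) :=
        (Fintype.sum_equiv (Equiv.arrowProdEquivProdArrow (Fin r × Fin m) (fun _ => Fin 2) (fun _ => Fin 2))
          _ _ fun q => rfl).symm
    _ = ∏ p : Fin r × Fin m, ∑ c : Fin 2 × Fin 2, H p c := (Fintype.prod_sum _).symm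
    _ = ∏ p : Fin r × Fin m, (if p.2 = g p.1 then star (φ p) ⬝ᵥ (M p.1) *ᵥ (φ p)
          else star (φ p) ⬝ᵥ (φ p)) := by
        refine Finset.prod_congr rfl fun p _ => ?_
        rw [hH]
        by_cases hp : p.2 = g p.1
        · simp only [hp, if_true, Fintype.sum_prod_type]
          simp only [dotProduct, mulVec, Finset.mul_sum, Fin.sum_univ_succ, Finset.univ_unique,
            Fin.default_eq_zero, Finset.sum_singleton, Fin.isValue, Finset.sum_const,
            Finset.card_singleton, one_smul, Pi.star_apply, RCLike.star_def]
          ring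
        · simp only [hp, if_false, Fintype.sum_prod_type]
          simp [dotProduct, Finset.sum_ite_eq, mul_comm]

/-- Let `M = M_1 ⊗ ⋯ ⊗ M_r` with each `M_i` a nonzero rank-1 PSD 2×2
matrix.  Consider the complete r-partite M-Hamiltonian on parts of size `m = ⌊n/r⌋`
(qubits `Fin r × Fin m`, one term for every `g : Fin r → Fin m`, acting on the tuple
`(k, g k)_k`).  Then every ε-sparsifier `w` (with `ε ∈ (0,1)`) has full support, i.e.
`w g ≠ 0` for every `g`; hence `SPR(M, n, ε) ≥ ⌊n/r⌋^r`. -/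
theorem stmt4 (r m : ℕ) (hr : 1 ≤ r) (ε : ℝ) (hε0 : 0 < ε) (hε1 : ε < 1)
    (M : Fin r → Matrix (Fin 2) (Fin 2) ℂ)
    (hPSD : ∀ k, (M k).PosSemidef) (hne : ∀ k, M k ≠ 0) (hrk : ∀ k, (M k).rank = 1)
    (w : (Fin r → Fin m) → ℝ) (hw : ∀ g, 0 ≤ w g)
    (hspars : ∀ ψ : (Fin r × Fin m → Fin 2) → ℂ,
      (1 - ε) * (∑ g : Fin r → Fin m,
          (star ψ ⬝ᵥ (locOpParts M (fun k => (k, g k))).mulVec ψ).re) ≤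
        (∑ g : Fin r → Fin m,
          w g * (star ψ ⬝ᵥ (locOpParts M (fun k => (k, g k))).mulVec ψ).re) ∧
      (∑ g : Fin r → Fin m,
          w g * (star ψ ⬝ᵥ (locOpParts M (fun k => (k, g k))).mulVec ψ).re) ≤
        (1 + ε) * (∑ g : Fin r → Fin m,
          (star ψ ⬝ᵥ (locOpParts M (fun k => (k, g k))).mulVec ψ).re)) :
    ∀ g : Fin r → Fin m, w g ≠ 0 := by
  intro g₀
  choose v t ht hvt using fun k => exists_quad_pos (hPSD k) (hne k)
  choose u hu hMu using fun k => exists_kernel_vec (hrk k)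
  set φ : Fin r × Fin m → Fin 2 → ℂ := fun p => if p.2 = g₀ p.1 then v p.1 else u p.1 with hφ
  set ψ : (Fin r × Fin m → Fin 2) → ℂ := fun x => ∏ p, φ p (x p) with hψ
  -- the value of each term on ψ
  have hQ : ∀ g : Fin r → Fin m,
      star ψ ⬝ᵥ (locOpParts M (fun k => (k, g k))).mulVec ψ =
      ∏ p : Fin r × Fin m,
        (if p.2 = g p.1 then star (φ p) ⬝ᵥ (M p.1) *ᵥ (φ p) else star (φ p) ⬝ᵥ (φ p)) :=
    fun g => locOpParts_quad M g φ
  set d : Fin r × Fin m → ℝ := fun p =>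
    if p.2 = g₀ p.1 then t p.1 else ∑ i, Complex.normSq (u p.1 i) with hd
  have hdpos : ∀ p, 0 < d p := by
    intro p
    rw [hd]
    by_cases hp : p.2 = g₀ p.1
    · simp only [hp, if_true]; exact ht p.1
    · simp only [hp, if_false]; exact sum_normSq_pos_s4 (hu p.1)
  have hQ0 : star ψ ⬝ᵥ (locOpParts M (fun k => (k, g₀ k))).mulVec ψ =
      ((∏ p : Fin r × Fin m, d p : ℝ) : ℂ) := by
    rw [hQ g₀, Complex.ofReal_prod]
    refine Finset.prod_congr rfl fun p _ => ?_
    by_cases hp : p.2 = g₀ p.1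
    · simp only [hφ, hd, hp, if_true]
      exact hvt p.1
    · simp only [hφ, hd, hp, if_false]
      exact star_dot_self_eq (u p.1)
  have hQg : ∀ g : Fin r → Fin m, g ≠ g₀ →
      star ψ ⬝ᵥ (locOpParts M (fun k => (k, g k))).mulVec ψ = 0 := by
    intro g hg
    obtain ⟨k, hk⟩ : ∃ k, g k ≠ g₀ k := by
      by_contra h; push_neg at h; exact hg (funext h)
    rw [hQ g]
    refine Finset.prod_eq_zero (Finset.mem_univ (k, g k)) ?_
    have h1 : ((k, g k) : Fin r × Fin m).2 = g ((k, g k) : Fin r × Fin m).1 := rfl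
    rw [if_pos h1]
    have h2 : φ (k, g k) = u k := by
      simp only [hφ]
      exact if_neg hk
    rw [h2, hMu k]
    simp
  set D : ℝ := ∏ p : Fin r × Fin m, d p with hD
  have hDpos : 0 < D := Finset.prod_pos fun p _ => hdpos p
  have hsum1 : (∑ g : Fin r → Fin m,
      (star ψ ⬝ᵥ (locOpParts M (fun k => (k, g k))).mulVec ψ).re) = D := by
    rw [Fintype.sum_eq_single g₀ (fun g hg => by rw [hQg g hg]; simp)]
    rw [hQ0, Complex.ofReal_re]
  have hsum2 : (∑ g : Fin r → Fin m,
      w g * (star ψ ⬝ᵥ (locOpParts M (fun k => (k, g k))).mulVec ψ).re) = w g₀ * D := by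
    rw [Fintype.sum_eq_single g₀ (fun g hg => by rw [hQg g hg]; simp)]
    rw [hQ0, Complex.ofReal_re]
  have hlb := (hspars ψ).1
  rw [hsum1, hsum2] at hlb
  have h1ε : (0:ℝ) < 1 - ε := by linarith
  have : 1 - ε ≤ w g₀ := le_of_mul_le_mul_right hlb hDpos
  intro hwz
  rw [hwz] at this
  linarith
end

section
/- Let M ∈ ℂ^{2^r × 2^r} be a diagonal matrix with entries in {0,1}, corresponding to a relation R ⊆ {0,1}^r (so M|x⟩ = |x⟩ if x ∈ R and M|x⟩ = 0 otherwise). Let H be an r-uniform hypergraph on [n] and w : H → ℝ_{≥0}. Then w is an ε-sparsifier of the quantum Hamiltonian with terms M_T = M|_T ⊗ Id for T ∈ H (preserving energies of all states ψ ∈ ℂ^{2^n} up to factor 1±ε) if and only if w is an ε-sparsifier of the classical CSP instance: for all assignments x ∈ {0,1}^n, Σ_{T∈H} w(T)·1[x|_T ∈ R] ∈ [1−ε,1+ε]·Σ_{T∈H} 1[x|_T ∈ R]. -/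
open scoped Classical ComplexOrder
open Matrix

/-- The classical (diagonal 0/1) predicate matrix associated to a relation
`R ⊆ {0,1}^r`. -/
noncomputable def clOp (r : ℕ) (R : Finset (Fin r → Fin 2)) :
    Matrix (Fin r → Fin 2) (Fin r → Fin 2) ℂ :=
  Matrix.diagonal fun a => if a ∈ R then 1 else 0

lemma localOp_mulVec {n r : ℕ} (R : Finset (Fin r → Fin 2)) (T : Fin r → Fin n)
    (hT : Function.Injective T) (ψ : (Fin n → Fin 2) → ℂ) :
    (localOp (clOp r R) T).mulVec ψ = fun x => (if x ∘ T ∈ R then 1 else 0) * ψ x := by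
  funext x
  unfold Matrix.mulVec dotProduct localOp clOp
  rw [Finset.sum_eq_single x]
  · simp [Matrix.diagonal_apply_eq]
  · intro y _ hyx
    simp only [Matrix.of_apply]
    split_ifs with h1
    · rw [Matrix.diagonal_apply, if_neg, zero_mul]
      intro hxy
      apply hyx
      funext i
      by_cases hi : i ∈ Set.range T
      · obtain ⟨j, rfl⟩ := hi
        exact (congrFun hxy j).symm
      · exact (h1 i hi).symm
    · exact zero_mul _
  · simp

lemma energy_re {n r : ℕ} (R : Finset (Fin r → Fin 2)) (T : Fin r → Fin n)
    (hT : Function.Injective T) (ψ : (Fin n → Fin 2) → ℂ) :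
    (star ψ ⬝ᵥ (localOp (clOp r R) T).mulVec ψ).re
      = ∑ x, (if x ∘ T ∈ R then (1:ℝ) else 0) * Complex.normSq (ψ x) := by
  rw [localOp_mulVec R T hT ψ]
  unfold dotProduct
  rw [Complex.re_sum]
  congr 1
  funext x
  simp only [Pi.star_apply]
  split_ifs with h
  · simp only [one_mul, mul_one, Pi.star_apply, RCLike.star_def]
    rw [← Complex.normSq_eq_conj_mul_self]
    simp
  · simp


/-- For a classical (diagonal, 0/1) predicate matrix coming from a relation
`R ⊆ {0,1}^r`, a nonnegative weighting `w` of an r-uniform hypergraph `H` is an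
ε-sparsifier of the quantum Hamiltonian (energies of all states preserved up to `1±ε`)
if and only if it is an ε-sparsifier of the classical CSP instance (satisfied-constraint
counts of all assignments preserved up to `1±ε`). -/
theorem stmt5 (r n : ℕ) (R : Finset (Fin r → Fin 2))
    (H : Finset (Fin r → Fin n)) (hinj : ∀ T ∈ H, Function.Injective T)
    (w : (Fin r → Fin n) → ℝ) (hw : ∀ T, 0 ≤ w T) (ε : ℝ) (hε : 0 ≤ ε) :
    (∀ ψ : (Fin n → Fin 2) → ℂ,
      (1 - ε) * (∑ T ∈ H, (star ψ ⬝ᵥ (localOp (clOp r R) T).mulVec ψ).re) ≤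
        (∑ T ∈ H, w T * (star ψ ⬝ᵥ (localOp (clOp r R) T).mulVec ψ).re) ∧
      (∑ T ∈ H, w T * (star ψ ⬝ᵥ (localOp (clOp r R) T).mulVec ψ).re) ≤
        (1 + ε) * (∑ T ∈ H, (star ψ ⬝ᵥ (localOp (clOp r R) T).mulVec ψ).re))
    ↔
    (∀ x : Fin n → Fin 2,
      (1 - ε) * (∑ T ∈ H, (if x ∘ T ∈ R then (1 : ℝ) else 0)) ≤
        (∑ T ∈ H, w T * (if x ∘ T ∈ R then (1 : ℝ) else 0)) ∧
      (∑ T ∈ H, w T * (if x ∘ T ∈ R then (1 : ℝ) else 0)) ≤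
        (1 + ε) * (∑ T ∈ H, (if x ∘ T ∈ R then (1 : ℝ) else 0))) := by


  set c : (Fin r → Fin n) → (Fin n → Fin 2) → ℝ :=
    fun T x => if x ∘ T ∈ R then (1:ℝ) else 0 with hc
  have hE : ∀ T ∈ H, ∀ ψ : (Fin n → Fin 2) → ℂ,
      (star ψ ⬝ᵥ (localOp (clOp r R) T).mulVec ψ).re
        = ∑ x, c T x * Complex.normSq (ψ x) := fun T hT ψ =>
    energy_re R T (hinj T hT) ψ
  constructor
  · intro hq x
    set ψ : (Fin n → Fin 2) → ℂ := fun y => if y = x then 1 else 0 with hψ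
    have hns : ∀ y, Complex.normSq (ψ y) = if y = x then 1 else 0 := by
      intro y; simp [hψ]
    have hone : ∀ T ∈ H,
        (star ψ ⬝ᵥ (localOp (clOp r R) T).mulVec ψ).re = c T x := by
      intro T hT
      rw [hE T hT ψ]
      simp_rw [hns, mul_ite, mul_one, mul_zero]
      simp
    obtain ⟨h1, h2⟩ := hq ψ
    have e1 : (∑ T ∈ H, (star ψ ⬝ᵥ (localOp (clOp r R) T).mulVec ψ).re) = ∑ T ∈ H, c T x :=
      Finset.sum_congr rfl hone
    have e2 : (∑ T ∈ H, w T * (star ψ ⬝ᵥ (localOp (clOp r R) T).mulVec ψ).re)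
        = ∑ T ∈ H, w T * c T x :=
      Finset.sum_congr rfl (fun T hT => by rw [hone T hT])
    rw [e1, e2] at h1 h2
    exact ⟨h1, h2⟩
  · intro hc' ψ
    have hswap : ∀ f : (Fin r → Fin n) → ℝ,
        ∑ T ∈ H, f T * ∑ x, c T x * Complex.normSq (ψ x)
          = ∑ x : Fin n → Fin 2, Complex.normSq (ψ x) * ∑ T ∈ H, f T * c T x := by
      intro f
      simp_rw [Finset.mul_sum]
      rw [Finset.sum_comm]
      congr 1; funext x; congr 1; funext T; ring
    have hEw : (∑ T ∈ H, w T * (star ψ ⬝ᵥ (localOp (clOp r R) T).mulVec ψ).re)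
        = ∑ x : Fin n → Fin 2, Complex.normSq (ψ x) * ∑ T ∈ H, w T * c T x := by
      rw [Finset.sum_congr rfl (fun T hT => by rw [hE T hT ψ])]; exact hswap w
    have hE1 : (∑ T ∈ H, (star ψ ⬝ᵥ (localOp (clOp r R) T).mulVec ψ).re)
        = ∑ x : Fin n → Fin 2, Complex.normSq (ψ x) * ∑ T ∈ H, c T x := by
      rw [Finset.sum_congr rfl (fun T hT => hE T hT ψ)]
      have := hswap (fun _ => 1)
      simpa using this
    rw [hEw, hE1]
    constructor
    · rw [Finset.mul_sum]
      apply Finset.sum_le_sum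
      intro x _
      rw [mul_left_comm]
      exact mul_le_mul_of_nonneg_left (hc' x).1 (Complex.normSq_nonneg _)
    · rw [Finset.mul_sum]
      apply Finset.sum_le_sum
      intro x _
      rw [mul_left_comm]
      exact mul_le_mul_of_nonneg_left (hc' x).2 (Complex.normSq_nonneg _)
end

section
/- Fix constants α ∈ (0, 1/2) and c ≥ 1. Let R be a uniformly random subset of {0,1}^r of cardinality k where α·2^r ≤ k ≤ (1−α)·2^r. If c ≤ log₂ r − log₂ log₂(1/α) − 1, then with probability 1 − o(1) as r → ∞, there exist b ∈ {0,1}^{r−c} and literals ℓ_1 ∈ {x_1, x̄_1}, …, ℓ_c ∈ {x_c, x̄_c} such that the projection R(b_1,…,b_{r−c}, ℓ_1,…,ℓ_c) equals AND_c = {1^c}. -/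
open scoped Classical

/-- The string in `{0,1}^r` obtained from constants `b` on the first `r-c` coordinates
and literals `ℓ_j ∈ {x_j, x̄_j}` (encoded by negation flags `s : Fin c → Bool`)
evaluated at an assignment `x : Fin c → Bool` on the last `c` coordinates. -/
def emb (r c : ℕ) (hcr : c ≤ r) (b : Fin (r - c) → Bool) (s x : Fin c → Bool) :
    Fin r → Bool := fun i =>
  if h : (i : ℕ) < r - c then b ⟨i, h⟩
  else Bool.xor (x ⟨(i : ℕ) - (r - c), by have := i.isLt; omega⟩)
                (s ⟨(i : ℕ) - (r - c), by have := i.isLt; omega⟩)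

/-! ### Stirling-type estimates -/

section StirlingPart

open Stirling Real Filter Nat

lemma my_sqrtpi_le_stirlingSeq (n : ℕ) (hn : 1 ≤ n) : Real.sqrt π ≤ stirlingSeq n := by
  obtain ⟨m, rfl⟩ : ∃ m, n = m + 1 := ⟨n - 1, by omega⟩
  exact stirlingSeq'_antitone.le_of_tendsto
    (tendsto_stirlingSeq_sqrt_pi.comp (tendsto_add_atTop_nat 1)) m

lemma my_stirlingSeq_le (n : ℕ) (hn : 2 ≤ n) : stirlingSeq n ≤ Real.exp 1 ^ 2 / 4 := by
  obtain ⟨m, rfl⟩ : ∃ m, n = m + 1 := ⟨n - 1, by omega⟩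
  have h := stirlingSeq'_antitone (show 1 ≤ m by omega)
  simp only [Function.comp] at h
  refine h.trans_eq ?_
  have h4 : Real.sqrt (2 * ((Nat.succ 1 : ℕ) : ℝ)) = 2 := by
    rw [show (2 * ((Nat.succ 1 : ℕ) : ℝ)) = 2 ^ 2 by norm_num, Real.sqrt_sq two_pos.le]
  have he : Real.exp 1 ≠ 0 := (Real.exp_pos 1).ne'
  rw [stirlingSeq, h4]
  norm_num [Nat.factorial]
  field_simp
  rw [← Real.exp_nat_mul]; norm_num; ring

lemma my_fact_lb (n : ℕ) (hn : 1 ≤ n) :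
    Real.sqrt π * (Real.sqrt (2 * n) * ((n : ℝ) / Real.exp 1) ^ n) ≤ (n ! : ℝ) := by
  have hd : (0:ℝ) < Real.sqrt (2 * n) * ((n : ℝ) / Real.exp 1) ^ n := by
    have : (0:ℝ) < n := by exact_mod_cast hn
    positivity
  have h := my_sqrtpi_le_stirlingSeq n hn
  rw [stirlingSeq, le_div_iff₀ hd] at h
  linarith

lemma my_fact_ub (n : ℕ) (hn : 2 ≤ n) :
    (n ! : ℝ) ≤ (Real.exp 1 ^ 2 / 4) * (Real.sqrt (2 * n) * ((n : ℝ) / Real.exp 1) ^ n) := by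
  have hd : (0:ℝ) < Real.sqrt (2 * n) * ((n : ℝ) / Real.exp 1) ^ n := by
    have : (0:ℝ) < n := by exact_mod_cast (show 0 < n by omega)
    positivity
  have h := my_stirlingSeq_le n hn
  rw [stirlingSeq, div_le_iff₀ hd] at h
  linarith

lemma my_numeric : Real.exp 1 ^ 4 ≤ 32 * Real.sqrt π := by
  have h1 : (1.772 : ℝ) ≤ Real.sqrt π := by
    rw [show (1.772:ℝ) = Real.sqrt (1.772^2) by rw [Real.sqrt_sq]; norm_num]
    exact Real.sqrt_le_sqrt (by nlinarith [Real.pi_gt_d6])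
  have h2 : Real.exp 1 ^ 4 ≤ (2.7182818286:ℝ) ^ 4 :=
    pow_le_pow_left₀ (Real.exp_pos 1).le Real.exp_one_lt_d9.le 4
  nlinarith

lemma my_edgeval (n m : ℕ) (hm : m + 1 = n) (hm1 : 1 ≤ m) :
    Real.exp (-1) ≤ ((m : ℝ) / n) ^ m := by
  have hm0 : (0:ℝ) < m := by exact_mod_cast hm1
  have hn0 : (0:ℝ) < n := by exact_mod_cast (show 0 < n by omega)
  have hq : (0:ℝ) < (m : ℝ) / n := by positivity
  have hlog : Real.log ((n:ℝ) / m) ≤ 1 / m := by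
    have h := Real.log_le_sub_one_of_pos (show (0:ℝ) < (n:ℝ)/m by positivity)
    have : (n:ℝ)/m - 1 = 1/m := by
      have hnm : (n:ℝ) = m + 1 := by exact_mod_cast hm.symm
      field_simp [hnm]
      linarith
    linarith
  have hlog2 : -1 ≤ (m : ℝ) * Real.log ((m:ℝ)/n) := by
    have : Real.log ((m:ℝ)/n) = - Real.log ((n:ℝ)/m) := by
      rw [← Real.log_inv]; congr 1; field_simp
    rw [this]
    have := mul_le_mul_of_nonneg_left hlog hm0.le
    rw [mul_one_div, div_self hm0.ne'] at this
    nlinarith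
  calc Real.exp (-1) ≤ Real.exp ((m:ℝ) * Real.log ((m:ℝ)/n)) := Real.exp_le_exp.2 hlog2
    _ = ((m : ℝ) / n) ^ m := by
        rw [← Real.log_pow, Real.exp_log (by positivity)]

lemma my_exp_neg_ge (n : ℕ) (h4 : 4 ≤ n) : 1 / Real.sqrt (2 * n) ≤ Real.exp (-1) := by
  have h8 : (8:ℝ) ≤ 2 * n := by
    have : (4:ℝ) ≤ n := by exact_mod_cast h4
    linarith
  have hs : Real.exp 1 ≤ Real.sqrt (2 * n) := by
    have h1 : Real.exp 1 ≤ 2.72 := by nlinarith [Real.exp_one_lt_d9]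
    have h2 : (2.72 : ℝ) ≤ Real.sqrt (2*n) := by
      rw [show (2.72:ℝ) = Real.sqrt (2.72^2) by rw [Real.sqrt_sq]; norm_num]
      exact Real.sqrt_le_sqrt (by nlinarith)
    linarith
  rw [Real.exp_neg]
  rw [one_div, inv_le_inv₀ (by positivity) (Real.exp_pos 1)]
  exact hs

/-- The binomial probability at the mean is at least `1/√(2n)`. -/
lemma my_peak (n k : ℕ) (h4 : 4 ≤ n) (hk1 : 1 ≤ k) (hk2 : k + 1 ≤ n) :
    1 / Real.sqrt (2 * n) ≤
      (n.choose k : ℝ) * ((k : ℝ) / n) ^ k * (((n - k : ℕ) : ℝ) / n) ^ (n - k) := by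
  set b : ℕ := n - k with hbdef
  have hnkb : n = k + b := by omega
  have hb1 : 1 ≤ b := by omega
  have hn0 : (0:ℝ) < n := by exact_mod_cast (show 0 < n by omega)
  have hk0 : (0:ℝ) < k := by exact_mod_cast hk1
  have hb0 : (0:ℝ) < b := by exact_mod_cast hb1
  have he : (0:ℝ) < Real.exp 1 := Real.exp_pos 1
  have hs2n : (0:ℝ) < Real.sqrt (2*n) := Real.sqrt_pos.2 (by positivity)
  by_cases hkc : k = 1
  · subst hkc
    have hb4 : b + 1 = n := by omega
    have hone : ((n:ℝ)) * (((1:ℕ):ℝ) / (n:ℝ)) ^ 1 = 1 := by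
      push_cast; field_simp
    have hval : (n.choose 1 : ℝ) * (((1:ℕ):ℝ) / (n:ℝ)) ^ 1 * ((b:ℝ)/n) ^ b = ((b:ℝ)/n)^b := by
      rw [Nat.choose_one_right]
      rw [show ((n:ℕ):ℝ) * (((1:ℕ):ℝ) / (n:ℝ)) ^ 1 * ((b:ℝ)/n) ^ b
            = (((n:ℝ)) * (((1:ℕ):ℝ) / (n:ℝ)) ^ 1) * ((b:ℝ)/n) ^ b by ring, hone, one_mul]
    calc 1 / Real.sqrt (2*n) ≤ Real.exp (-1) := my_exp_neg_ge n h4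
      _ ≤ ((b:ℝ)/n)^b := my_edgeval n b hb4 hb1
      _ = _ := hval.symm
  by_cases hbc : b = 1
  · have hch : n.choose k = n := by
      rw [← Nat.choose_symm (by omega : k ≤ n), show n - k = 1 by omega, Nat.choose_one_right]
    have hval : (n.choose k : ℝ) * ((k:ℝ)/n) ^ k * (((b:ℕ):ℝ)/n) ^ b = ((k:ℝ)/n)^k := by
      rw [hch, hbc]; push_cast; field_simp
    rw [hval]
    calc 1 / Real.sqrt (2*n) ≤ Real.exp (-1) := my_exp_neg_ge n h4
      _ ≤ ((k:ℝ)/n)^k := my_edgeval n k (by omega) hk1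
  -- main case 2 ≤ k, 2 ≤ b
  have hk2' : 2 ≤ k := by omega
  have hb2' : 2 ≤ b := by omega
  set e := Real.exp 1
  set s2 : ℝ := e^2/4 with hs2def
  have hs2pos : (0:ℝ) < s2 := by positivity
  set X : ℝ := ((n:ℝ)/e)^n with hX
  set Yk : ℝ := ((k:ℝ)/e)^k with hYk
  set Yb : ℝ := ((b:ℝ)/e)^b with hYb
  set P : ℝ := ((k:ℝ)/n)^k * ((b:ℝ)/n)^b with hP
  have hXpos : 0 < X := by positivity
  have hYkpos : 0 < Yk := by positivity
  have hYbpos : 0 < Yb := by positivity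
  have hPpos : 0 < P := by positivity
  have hIdent : X * P = Yk * Yb := by
    have e1 : ((n:ℝ)/e) * ((k:ℝ)/n) = (k:ℝ)/e := by field_simp
    have e2 : ((n:ℝ)/e) * ((b:ℝ)/n) = (b:ℝ)/e := by field_simp
    have hpow : ((n:ℝ)/e)^n = ((n:ℝ)/e)^k * ((n:ℝ)/e)^b := by
      rw [← pow_add]; congr 1
    have step : X * P = (((n:ℝ)/e) * ((k:ℝ)/n))^k * (((n:ℝ)/e) * ((b:ℝ)/n))^b := by
      rw [hX, hP, hpow, mul_pow, mul_pow]; ring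
    rw [step, e1, e2, hYk, hYb]
  have hub_k := my_fact_ub k hk2'
  have hub_b := my_fact_ub b hb2'
  have hlb_n := my_fact_lb n (by omega)
  have hsk : (0:ℝ) < Real.sqrt (2*k) := Real.sqrt_pos.2 (by positivity)
  have hsb : (0:ℝ) < Real.sqrt (2*b) := Real.sqrt_pos.2 (by positivity)
  have c2 : Real.sqrt (2*k) * Real.sqrt (2*b) ≤ (n:ℝ) := by
    rw [← Real.sqrt_mul (by positivity)]
    rw [show (n:ℝ) = Real.sqrt ((n:ℝ)^2) by rw [Real.sqrt_sq hn0.le]]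
    apply Real.sqrt_le_sqrt
    have hcast : (n:ℝ) = (k:ℝ) + b := by exact_mod_cast hnkb
    nlinarith [sq_nonneg ((k:ℝ) - b)]
  have c1 : (k ! : ℝ) * (b ! : ℝ) ≤
      (s2 * (Real.sqrt (2*k) * Yk)) * (s2 * (Real.sqrt (2*b) * Yb)) := by
    apply mul_le_mul hub_k hub_b (by positivity) (by positivity)
  have c3 : (s2 * (Real.sqrt (2*k) * Yk)) * (s2 * (Real.sqrt (2*b) * Yb))
      ≤ 2 * Real.sqrt π * n * (Yk * Yb) := by
    have hs2sq : s2^2 ≤ 2 * Real.sqrt π := by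
      rw [hs2def]
      have := my_numeric
      nlinarith [Real.sqrt_nonneg π, Real.exp_pos 1]
    have expand : (s2 * (Real.sqrt (2*k) * Yk)) * (s2 * (Real.sqrt (2*b) * Yb))
        = s2^2 * (Real.sqrt (2*k) * Real.sqrt (2*b)) * (Yk * Yb) := by ring
    rw [expand]
    have h1 : s2^2 * (Real.sqrt (2*k) * Real.sqrt (2*b)) ≤ (2 * Real.sqrt π) * n := by
      calc s2^2 * (Real.sqrt (2*k) * Real.sqrt (2*b))
          ≤ (2 * Real.sqrt π) * (Real.sqrt (2*k) * Real.sqrt (2*b)) := by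
            apply mul_le_mul_of_nonneg_right hs2sq (by positivity)
        _ ≤ (2 * Real.sqrt π) * n := by
            apply mul_le_mul_of_nonneg_left c2 (by positivity)
    calc s2^2 * (Real.sqrt (2*k) * Real.sqrt (2*b)) * (Yk * Yb)
        ≤ ((2 * Real.sqrt π) * n) * (Yk * Yb) := by
          apply mul_le_mul_of_nonneg_right h1 (by positivity)
      _ = 2 * Real.sqrt π * n * (Yk * Yb) := by ring
  have c4 : 2 * Real.sqrt π * n * (Yk * Yb)
      = Real.sqrt (2*n) * ((Real.sqrt π * (Real.sqrt (2*n) * X)) * P) := by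
    have hss : Real.sqrt (2*n) * Real.sqrt (2*n) = 2*n := Real.mul_self_sqrt (by positivity)
    rw [← hIdent]
    linear_combination (-(Real.sqrt π * X * P)) * hss
  have c5 : Real.sqrt (2*n) * ((Real.sqrt π * (Real.sqrt (2*n) * X)) * P)
      ≤ Real.sqrt (2*n) * ((n ! : ℝ) * P) :=
    mul_le_mul_of_nonneg_left (mul_le_mul_of_nonneg_right hlb_n hPpos.le) hs2n.le
  have key : (k ! : ℝ) * (b ! : ℝ) ≤ Real.sqrt (2*n) * ((n ! : ℝ) * P) :=
    le_trans c1 (le_trans c3 (le_trans (le_of_eq c4) c5))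
  have hkf : (0:ℝ) < (k ! : ℝ) := by exact_mod_cast k.factorial_pos
  have hbf : (0:ℝ) < (b ! : ℝ) := by exact_mod_cast b.factorial_pos
  have hcast : (n.choose k : ℝ) = (n ! : ℝ) / ((k ! : ℝ) * (b ! : ℝ)) := by
    rw [Nat.cast_choose ℝ (by omega : k ≤ n)]
  rw [hcast, div_mul_eq_mul_div, div_mul_eq_mul_div, div_le_div_iff₀ hs2n (by positivity)]
  calc 1 * ((k ! :ℝ) * (b ! : ℝ)) = (k ! : ℝ) * (b ! : ℝ) := by ring
    _ ≤ Real.sqrt (2*n) * ((n ! : ℝ) * P) := key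
    _ = (n ! : ℝ) * ((k:ℝ)/n)^k * ((b:ℝ)/n)^b * Real.sqrt (2*n) := by rw [hP]; ring

end StirlingPart

/-! ### Cube decomposition -/

def glue (r c : ℕ) (hcr : c ≤ r) (b : Fin (r - c) → Bool) (y : Fin c → Bool) :
    Fin r → Bool := fun i =>
  if h : (i : ℕ) < r - c then b ⟨i, h⟩
  else y ⟨(i : ℕ) - (r - c), by have := i.isLt; omega⟩

def hd (r c : ℕ) (z : Fin r → Bool) : Fin (r - c) → Bool :=
  fun i => z ⟨i, lt_of_lt_of_le i.isLt (Nat.sub_le r c)⟩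

def tl (r c : ℕ) (hcr : c ≤ r) (z : Fin r → Bool) : Fin c → Bool :=
  fun j => z ⟨(r - c) + j, by have := j.isLt; omega⟩

lemma emb_glue (r c : ℕ) (hcr : c ≤ r) (b : Fin (r - c) → Bool) (s x : Fin c → Bool) :
    emb r c hcr b s x = glue r c hcr b (fun j => Bool.xor (x j) (s j)) := rfl

lemma hd_glue (r c : ℕ) (hcr : c ≤ r) (b : Fin (r - c) → Bool) (y : Fin c → Bool) :
    hd r c (glue r c hcr b y) = b := by
  funext i
  have h : ((i : ℕ) : ℕ) < r - c := i.isLt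
  simp only [hd, glue, dif_pos h]

lemma tl_glue (r c : ℕ) (hcr : c ≤ r) (b : Fin (r - c) → Bool) (y : Fin c → Bool) :
    tl r c hcr (glue r c hcr b y) = y := by
  funext j
  have h : ¬ ((r - c) + (j : ℕ) < r - c) := by omega
  simp only [tl, glue, dif_neg h]
  congr 1
  apply Fin.ext
  simp

lemma glue_hd_tl (r c : ℕ) (hcr : c ≤ r) (z : Fin r → Bool) :
    glue r c hcr (hd r c z) (tl r c hcr z) = z := by
  funext i
  by_cases h : (i : ℕ) < r - c
  · simp only [glue, dif_pos h, hd]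
  · simp only [glue, dif_neg h, tl]
    congr 1
    apply Fin.ext
    simp
    omega

noncomputable def fib (r c : ℕ) (hcr : c ≤ r) (R : Finset (Fin r → Bool))
    (b : Fin (r - c) → Bool) : Finset (Fin c → Bool) :=
  Finset.univ.filter (fun y => glue r c hcr b y ∈ R)

lemma mem_fib (r c : ℕ) (hcr : c ≤ r) (R : Finset (Fin r → Bool)) (b : Fin (r - c) → Bool)
    (y : Fin c → Bool) : y ∈ fib r c hcr R b ↔ glue r c hcr b y ∈ R := by
  simp [fib]

noncomputable def gmap (r c : ℕ) (hcr : c ≤ r)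
    (f : (Fin (r - c) → Bool) → Finset (Fin c → Bool)) : Finset (Fin r → Bool) :=
  Finset.univ.filter (fun z => tl r c hcr z ∈ f (hd r c z))

lemma fib_gmap (r c : ℕ) (hcr : c ≤ r) (f : (Fin (r - c) → Bool) → Finset (Fin c → Bool))
    (b : Fin (r - c) → Bool) : fib r c hcr (gmap r c hcr f) b = f b := by
  ext y
  rw [mem_fib]
  simp only [gmap, Finset.mem_filter, Finset.mem_univ, true_and]
  rw [hd_glue r c hcr, tl_glue r c hcr]

lemma gmap_fib (r c : ℕ) (hcr : c ≤ r) (R : Finset (Fin r → Bool)) :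
    gmap r c hcr (fib r c hcr R) = R := by
  ext z
  simp only [gmap, Finset.mem_filter, Finset.mem_univ, true_and]
  rw [mem_fib, glue_hd_tl]

lemma fib_bijective (r c : ℕ) (hcr : c ≤ r) :
    Function.Bijective (fun R => fib r c hcr R) :=
  Function.bijective_iff_has_inverse.mpr
    ⟨gmap r c hcr, fun R => gmap_fib r c hcr R, fun f => funext (fib_gmap r c hcr f)⟩

lemma card_fib_sum (r c : ℕ) (hcr : c ≤ r) (R : Finset (Fin r → Bool)) :
    R.card = ∑ b : Fin (r - c) → Bool, (fib r c hcr R b).card := by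
  rw [Finset.card_eq_sum_card_fiberwise (f := hd r c) (t := Finset.univ)
    (fun x _ => Finset.mem_univ _)]
  apply Finset.sum_congr rfl
  intro b _
  apply Finset.card_nbij' (i := fun z => tl r c hcr z) (j := fun y => glue r c hcr b y)
  · intro z hz
    simp only [Finset.mem_coe, Finset.mem_filter] at hz
    rw [Finset.mem_coe, mem_fib, ← hz.2, glue_hd_tl]
    exact hz.1
  · intro y hy
    rw [Finset.mem_coe, mem_fib] at hy
    simp only [Finset.mem_coe, Finset.mem_filter]
    exact ⟨hy, hd_glue r c hcr b y⟩
  · intro z hz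
    simp only [Finset.mem_coe, Finset.mem_filter] at hz
    rw [← hz.2]; exact glue_hd_tl r c hcr z
  · intro y hy
    exact tl_glue r c hcr b y

/-! ### Weighted sums -/

lemma sum_all (γ : Type*) [Fintype γ] (p q : ℝ) (hpq : p + q = 1) :
    ∑ S : Finset γ, p ^ S.card * q ^ (Fintype.card γ - S.card) = 1 := by
  classical
  have h := Finset.prod_add (fun _ : γ => p) (fun _ : γ => q) Finset.univ
  simp only [Finset.prod_const] at h
  rw [hpq, one_pow, Finset.powerset_univ] at h
  calc ∑ S : Finset γ, p ^ S.card * q ^ (Fintype.card γ - S.card)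
      = ∑ S : Finset γ, p ^ S.card * q ^ ((Finset.univ \ S).card) := by
        apply Finset.sum_congr rfl
        intro S _
        rw [Finset.card_sdiff_of_subset (Finset.subset_univ S), Finset.card_univ]
    _ = 1 := h.symm

lemma sum_singletons (γ : Type*) [Fintype γ] (p q : ℝ) :
    ∑ S ∈ Finset.univ.filter (fun S : Finset γ => S.card = 1),
      p ^ S.card * q ^ (Fintype.card γ - S.card)
      = (Fintype.card γ : ℝ) * (p * q ^ (Fintype.card γ - 1)) := by
  classical
  have hconst : ∀ S ∈ Finset.univ.filter (fun S : Finset γ => S.card = 1),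
      p ^ S.card * q ^ (Fintype.card γ - S.card) = p * q ^ (Fintype.card γ - 1) := by
    intro S hS
    simp only [Finset.mem_filter] at hS
    rw [hS.2, pow_one]
  rw [Finset.sum_congr rfl hconst, Finset.sum_const, nsmul_eq_mul]
  congr 1
  have : Finset.univ.filter (fun S : Finset γ => S.card = 1)
      = Finset.powersetCard 1 (Finset.univ : Finset γ) := by
    rw [Finset.powersetCard_eq_filter, Finset.powerset_univ]
  rw [this, Finset.card_powersetCard, Finset.card_univ, Nat.choose_one_right]

lemma sum_W (γ : Type*) [Fintype γ] (p q : ℝ) (hpq : p + q = 1) :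
    ∑ S : Finset γ, (if S.card = 1 then 0 else p ^ S.card * q ^ (Fintype.card γ - S.card))
      = 1 - (Fintype.card γ : ℝ) * (p * q ^ (Fintype.card γ - 1)) := by
  classical
  have split := Finset.sum_filter_add_sum_filter_not Finset.univ
    (fun S : Finset γ => S.card = 1)
    (fun S : Finset γ => p ^ S.card * q ^ (Fintype.card γ - S.card))
  have split2 := Finset.sum_filter_add_sum_filter_not Finset.univ
    (fun S : Finset γ => S.card = 1)
    (fun S : Finset γ => if S.card = 1 then (0:ℝ)
      else p ^ S.card * q ^ (Fintype.card γ - S.card))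
  have e1 : ∑ S ∈ Finset.univ.filter (fun S : Finset γ => S.card = 1),
      (if S.card = 1 then (0:ℝ) else p ^ S.card * q ^ (Fintype.card γ - S.card)) = 0 := by
    apply Finset.sum_eq_zero
    intro S hS
    simp only [Finset.mem_filter] at hS
    rw [if_pos hS.2]
  have e2 : ∑ S ∈ Finset.univ.filter (fun S : Finset γ => ¬ S.card = 1),
      (if S.card = 1 then (0:ℝ) else p ^ S.card * q ^ (Fintype.card γ - S.card))
      = ∑ S ∈ Finset.univ.filter (fun S : Finset γ => ¬ S.card = 1),
        p ^ S.card * q ^ (Fintype.card γ - S.card) := by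
    apply Finset.sum_congr rfl
    intro S hS
    simp only [Finset.mem_filter] at hS
    rw [if_neg hS.2]
  rw [e1, e2, zero_add] at split2
  rw [sum_all γ p q hpq] at split
  rw [sum_singletons γ p q] at split
  linarith [split2, split]

lemma main_sum (r c : ℕ) (hcr : c ≤ r) (p q : ℝ) (hpq : p + q = 1) :
    ∑ R : Finset (Fin r → Bool), ∏ b : Fin (r - c) → Bool,
      (if (fib r c hcr R b).card = 1 then (0:ℝ)
       else p ^ (fib r c hcr R b).card
          * q ^ (Fintype.card (Fin c → Bool) - (fib r c hcr R b).card))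
    = (1 - (Fintype.card (Fin c → Bool) : ℝ)
          * (p * q ^ (Fintype.card (Fin c → Bool) - 1)))
        ^ (Fintype.card (Fin (r - c) → Bool)) := by
  classical
  set W : Finset (Fin c → Bool) → ℝ := fun S =>
    if S.card = 1 then (0:ℝ) else p ^ S.card * q ^ (Fintype.card (Fin c → Bool) - S.card)
    with hW
  have step1 : ∑ R : Finset (Fin r → Bool), ∏ b : Fin (r - c) → Bool, W (fib r c hcr R b)
      = ∑ f : (Fin (r - c) → Bool) → Finset (Fin c → Bool), ∏ b, W (f b) :=
    Fintype.sum_bijective _ (fib_bijective r c hcr) _ _ (fun R => rfl)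
  have step2 : ∏ b : Fin (r - c) → Bool, ∑ S : Finset (Fin c → Bool), W S
      = ∑ f : (Fin (r - c) → Bool) → Finset (Fin c → Bool), ∏ b, W (f b) := by
    rw [Finset.prod_univ_sum]
    rw [Fintype.piFinset_univ]
  rw [step1, ← step2]
  rw [Finset.prod_const]
  rw [sum_W _ p q hpq, Finset.card_univ]

lemma bad_fib (r c : ℕ) (hcr : c ≤ r) (R : Finset (Fin r → Bool))
    (hbad : ¬ ∃ (b : Fin (r - c) → Bool) (s : Fin c → Bool),
      ∀ x : Fin c → Bool, (emb r c hcr b s x ∈ R ↔ x = fun _ => true))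
    (b : Fin (r - c) → Bool) : (fib r c hcr R b).card ≠ 1 := by
  intro h1
  obtain ⟨y0, hy0⟩ := Finset.card_eq_one.mp h1
  apply hbad
  refine ⟨b, fun j => !(y0 j), fun x => ?_⟩
  rw [emb_glue, ← mem_fib r c hcr, hy0, Finset.mem_singleton]
  constructor
  · intro hEq
    funext j
    have h := congrFun hEq j
    revert h
    cases hx : x j <;> cases hy : y0 j <;> simp
  · intro hEq
    funext j
    have h := congrFun hEq j
    rw [h]
    cases hy : y0 j <;> simp

/-! ### Main theorem -/

/-- Fix `α ∈ (0,1/2)` and `c ≥ 1` with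
`c ≤ log₂ r − log₂ log₂ (1/α) − 1`.  Among all relations `R ⊆ {0,1}^r` of cardinality
`k ∈ [α·2^r, (1−α)·2^r]`, the fraction of those admitting **no** projection
`R(b_1,…,b_{r−c},ℓ_1,…,ℓ_c) = AND_c = {1^c}` is at most
`2^{(r+1)/2}·exp(−2^{r/2})`, i.e. the property holds with probability `1 − o(1)`. -/
theorem stmt9 (α : ℝ) (hα0 : 0 < α) (hα2 : α < 1 / 2) (c : ℕ) (hc : 1 ≤ c)
    (r k : ℕ) (hcr : c ≤ r)
    (hk1 : α * 2 ^ r ≤ (k : ℝ)) (hk2 : (k : ℝ) ≤ (1 - α) * 2 ^ r)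
    (hcbound : (c : ℝ) ≤ Real.logb 2 r - Real.logb 2 (Real.logb 2 (1 / α)) - 1) :
    ((Finset.univ.filter fun R : Finset (Fin r → Bool) =>
        R.card = k ∧
        ¬ ∃ (b : Fin (r - c) → Bool) (s : Fin c → Bool),
            ∀ x : Fin c → Bool,
              (emb r c hcr b s x ∈ R ↔ x = fun _ => true)).card : ℝ)
      ≤ (2 : ℝ) ^ (((r : ℝ) + 1) / 2) * Real.exp (-(2 : ℝ) ^ ((r : ℝ) / 2)) *
        ((Finset.univ.filter fun R : Finset (Fin r → Bool) => R.card = k).card : ℝ) := by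
  classical
  have h2r : (0:ℝ) < (2:ℝ)^r := by positivity
  set p : ℝ := (k:ℝ) / 2^r with hpdef
  set q : ℝ := 1 - p with hqdef
  have hpq : p + q = 1 := by rw [hqdef]; ring
  have hpα : α ≤ p := by rw [hpdef, le_div_iff₀ h2r]; exact hk1
  have hp1 : p ≤ 1 - α := by rw [hpdef, div_le_iff₀ h2r]; linarith [hk2]
  have hqα : α ≤ q := by rw [hqdef]; linarith
  have hp0 : 0 < p := lt_of_lt_of_le hα0 hpα
  have hq0 : 0 < q := lt_of_lt_of_le hα0 hqα
  -- k bounds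
  have hk_pos : 1 ≤ k := by
    rcases Nat.eq_zero_or_pos k with h | h
    · exfalso; rw [h] at hk1; push_cast at hk1; nlinarith
    · exact h
  have hk_lt : k + 1 ≤ 2^r := by
    by_contra h
    push_neg at h
    have h' : (2^r : ℕ) ≤ k := by omega
    have : (2:ℝ)^r ≤ (k:ℝ) := by exact_mod_cast h'
    nlinarith
  -- log bounds
  set L : ℝ := Real.logb 2 (1/α) with hLdef
  have hL1 : 1 < L := by
    rw [hLdef, Real.lt_logb_iff_rpow_lt one_lt_two (by positivity)]
    rw [Real.rpow_one]
    rw [lt_div_iff₀ hα0]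
    linarith
  have hr1 : r ≠ 0 := by
    intro h
    rw [h] at hcbound
    have h0 : Real.logb 2 ((0:ℕ):ℝ) = 0 := by norm_num
    rw [h0] at hcbound
    have hLpos : 0 < Real.logb 2 L := Real.logb_pos one_lt_two hL1
    have : (1:ℝ) ≤ c := by exact_mod_cast hc
    linarith
  have hr0 : (0:ℝ) < r := by
    have : 1 ≤ r := Nat.one_le_iff_ne_zero.mpr hr1
    exact_mod_cast Nat.lt_of_lt_of_le Nat.zero_lt_one this
  have key : (2:ℝ) ^ ((c:ℝ) + 1) * L ≤ r := by
    have h2 : (c:ℝ) + 1 + Real.logb 2 L ≤ Real.logb 2 r := by linarith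
    have h3 := Real.rpow_le_rpow_of_exponent_le one_le_two h2
    rw [Real.rpow_logb two_pos (by norm_num) hr0] at h3
    rw [Real.rpow_add two_pos,
      Real.rpow_logb two_pos (by norm_num) (by linarith : (0:ℝ) < L)] at h3
    exact h3
  have hc1cast : (2:ℝ) ^ ((c:ℝ) + 1) = (2:ℝ) ^ (c + 1 : ℕ) := by
    rw [← Real.rpow_natCast 2 (c+1)]
    congr 1
    push_cast
    ring
  have hmL : L * (2:ℝ)^(c:ℕ) ≤ (r:ℝ)/2 := by
    rw [hc1cast] at key
    rw [pow_succ] at key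
    nlinarith
  have hr4 : (4:ℝ) < r := by
    have h4c : (4:ℝ) ≤ (2:ℝ)^(c+1:ℕ) := by
      calc (4:ℝ) = 2^(2:ℕ) := by norm_num
        _ ≤ 2^(c+1:ℕ) := by
            apply pow_le_pow_right₀ (by norm_num) (by omega)
    rw [hc1cast] at key
    nlinarith
  have hr5 : 5 ≤ r := by
    have : (4:ℕ) < r := by exact_mod_cast hr4
    omega
  -- α^(2^c) ≥ 2^(-r/2)
  have hαeq : α = (2:ℝ) ^ (-L) := by
    rw [hLdef, Real.rpow_neg (by norm_num : (0:ℝ) ≤ 2),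
      Real.rpow_logb two_pos (by norm_num) (by positivity : (0:ℝ) < 1/α), one_div, inv_inv]
  have hαm : α ^ (2^c : ℕ) = (2:ℝ) ^ (-(L * ((2^c:ℕ):ℝ))) := by
    rw [hαeq, ← Real.rpow_natCast ((2:ℝ)^(-L)) (2^c),
      ← Real.rpow_mul (by norm_num : (0:ℝ) ≤ 2)]
    congr 1
    ring
  have hα2c : (2:ℝ) ^ ((r:ℝ)/2) ≤ (2:ℝ)^(r:ℕ) * α ^ (2^c : ℕ) := by
    have hexp : -((r:ℝ)/2) ≤ -(L * ((2^c:ℕ):ℝ)) := by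
      have : ((2^c:ℕ):ℝ) = (2:ℝ)^(c:ℕ) := by push_cast; ring
      rw [this]
      linarith
    have h1 : (2:ℝ) ^ (-((r:ℝ)/2)) ≤ (2:ℝ) ^ (-(L * ((2^c:ℕ):ℝ))) :=
      Real.rpow_le_rpow_of_exponent_le one_le_two hexp
    rw [← hαm] at h1
    have h2 : (2:ℝ)^((r:ℝ)/2) = (2:ℝ)^(r:ℕ) * (2:ℝ)^(-((r:ℝ)/2)) := by
      rw [← Real.rpow_natCast 2 r, ← Real.rpow_add two_pos]
      congr 1
      ring
    rw [h2]
    apply mul_le_mul_of_nonneg_left h1 (by positivity)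
  -- cardinalities of function types
  have hcardγ : Fintype.card (Fin c → Bool) = 2^c := by simp
  have hcardβ : Fintype.card (Fin (r-c) → Bool) = 2^(r-c) := by simp
  have hcardP : Fintype.card (Fin r → Bool) = 2^r := by simp
  set A := Finset.univ.filter fun R : Finset (Fin r → Bool) =>
        R.card = k ∧
        ¬ ∃ (b : Fin (r - c) → Bool) (s : Fin c → Bool),
            ∀ x : Fin c → Bool,
              (emb r c hcr b s x ∈ R ↔ x = fun _ => true) with hA
  set W : Finset (Fin c → Bool) → ℝ := fun S =>
    if S.card = 1 then (0:ℝ) else p ^ S.card * q ^ (Fintype.card (Fin c → Bool) - S.card)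
    with hW
  have hWnonneg : ∀ S, 0 ≤ W S := by
    intro S
    rw [hW]
    dsimp only
    split
    · exact le_refl 0
    · positivity
  have prodW_eq : ∀ R ∈ A, (∏ b : Fin (r-c) → Bool, W (fib r c hcr R b))
      = p ^ k * q ^ (2^r - k) := by
    intro R hR
    rw [hA, Finset.mem_filter] at hR
    obtain ⟨-, hRk, hbad⟩ := hR
    have hne := bad_fib r c hcr R hbad
    have hle : ∀ b, (fib r c hcr R b).card ≤ Fintype.card (Fin c → Bool) :=
      fun b => Finset.card_le_univ _
    calc (∏ b : Fin (r-c) → Bool, W (fib r c hcr R b))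
        = ∏ b : Fin (r-c) → Bool,
            (p ^ (fib r c hcr R b).card
              * q ^ (Fintype.card (Fin c → Bool) - (fib r c hcr R b).card)) := by
          apply Finset.prod_congr rfl
          intro b _
          rw [hW]
          exact if_neg (hne b)
      _ = (∏ b : Fin (r-c) → Bool, p ^ (fib r c hcr R b).card)
          * (∏ b : Fin (r-c) → Bool,
              q ^ (Fintype.card (Fin c → Bool) - (fib r c hcr R b).card)) :=
          Finset.prod_mul_distrib
      _ = p ^ (∑ b : Fin (r-c) → Bool, (fib r c hcr R b).card)
          * q ^ (∑ b : Fin (r-c) → Bool,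
              (Fintype.card (Fin c → Bool) - (fib r c hcr R b).card)) := by
          rw [Finset.prod_pow_eq_pow_sum, Finset.prod_pow_eq_pow_sum]
      _ = p ^ k * q ^ (2^r - k) := by
          have hsum : ∑ b : Fin (r-c) → Bool, (fib r c hcr R b).card = k := by
            rw [← card_fib_sum r c hcr R, hRk]
          have hsplit : (∑ b : Fin (r-c) → Bool,
                (Fintype.card (Fin c → Bool) - (fib r c hcr R b).card))
              + (∑ b : Fin (r-c) → Bool, (fib r c hcr R b).card)
              = ∑ b : Fin (r-c) → Bool, Fintype.card (Fin c → Bool) := by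
            rw [← Finset.sum_add_distrib]
            apply Finset.sum_congr rfl
            intro b _
            have := hle b
            omega
          rw [Finset.sum_const, Finset.card_univ, smul_eq_mul, hcardγ, hcardβ] at hsplit
          have h2rc : 2^(r-c) * 2^c = 2^r := by
            rw [← pow_add]
            congr 1
            omega
          rw [hsum, h2rc] at hsplit
          rw [hsum, hcardγ]
          have : (∑ b : Fin (r-c) → Bool,
              (2^c - (fib r c hcr R b).card)) = 2^r - k := by
            omega
          rw [this]
  have T1 : ∑ R ∈ A, (∏ b : Fin (r-c) → Bool, W (fib r c hcr R b))
      = (A.card : ℝ) * (p ^ k * q ^ (2^r - k)) := by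
    rw [Finset.sum_congr rfl prodW_eq, Finset.sum_const, nsmul_eq_mul]
  have T2 : ∑ R ∈ A, (∏ b : Fin (r-c) → Bool, W (fib r c hcr R b))
      ≤ ∑ R : Finset (Fin r → Bool), (∏ b : Fin (r-c) → Bool, W (fib r c hcr R b)) := by
    apply Finset.sum_le_sum_of_subset_of_nonneg (Finset.filter_subset _ _)
    intro R _ _
    exact Finset.prod_nonneg fun b _ => hWnonneg _
  have T3 : ∑ R : Finset (Fin r → Bool), (∏ b : Fin (r-c) → Bool, W (fib r c hcr R b))
      = (1 - (Fintype.card (Fin c → Bool) : ℝ)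
          * (p * q ^ (Fintype.card (Fin c → Bool) - 1)))
        ^ (Fintype.card (Fin (r - c) → Bool)) := main_sum r c hcr p q hpq
  -- the singleton mass s
  set sm : ℝ := (Fintype.card (Fin c → Bool) : ℝ)
      * (p * q ^ (Fintype.card (Fin c → Bool) - 1)) with hsm
  have hsm0 : 0 ≤ sm := by rw [hsm]; positivity
  have hsm1 : sm ≤ 1 := by
    have hW' := sum_W (Fin c → Bool) p q hpq
    have : (0:ℝ) ≤ ∑ S : Finset (Fin c → Bool),
        (if S.card = 1 then 0 else p ^ S.card * q ^ (Fintype.card (Fin c → Bool) - S.card)) :=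
      Finset.sum_nonneg fun S _ => hWnonneg S
    rw [hW'] at this
    linarith
  have T4 : (1 - sm) ^ (Fintype.card (Fin (r - c) → Bool))
      ≤ Real.exp (-(2:ℝ) ^ ((r:ℝ)/2)) := by
    have step1 : (1 - sm) ^ (Fintype.card (Fin (r - c) → Bool))
        ≤ (Real.exp (-sm)) ^ (Fintype.card (Fin (r - c) → Bool)) := by
      apply pow_le_pow_left₀ (by linarith)
      linarith [Real.add_one_le_exp (-sm)]
    have step2 : (Real.exp (-sm)) ^ (Fintype.card (Fin (r - c) → Bool))
        = Real.exp (-(sm * (Fintype.card (Fin (r - c) → Bool) : ℝ))) := by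
      rw [← Real.exp_nat_mul]
      congr 1
      ring
    have step3 : (2:ℝ) ^ ((r:ℝ)/2) ≤ sm * (Fintype.card (Fin (r - c) → Bool) : ℝ) := by
      rw [hsm, hcardγ, hcardβ]
      have hq' : α ^ (2^c - 1 : ℕ) ≤ q ^ (2^c - 1 : ℕ) :=
        pow_le_pow_left₀ hα0.le hqα _
      have hαm' : α * α ^ (2^c - 1 : ℕ) = α ^ (2^c : ℕ) := by
        rw [← pow_succ']
        congr 1
        have : 1 ≤ 2^c := Nat.one_le_two_pow
        omega
      have hbig : (2:ℝ)^(r:ℕ) * α ^ (2^c:ℕ)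
          ≤ ((2^c:ℕ):ℝ) * (p * q ^ (2^c - 1 : ℕ)) * ((2^(r-c):ℕ):ℝ) := by
        have hcast : ((2^c:ℕ):ℝ) * ((2^(r-c):ℕ):ℝ) = (2:ℝ)^(r:ℕ) := by
          push_cast
          rw [← pow_add]
          congr 1
          omega
        have hmono : α * α ^ (2^c - 1 : ℕ) ≤ p * q ^ (2^c - 1 : ℕ) := by
          apply mul_le_mul hpα hq' (by positivity) hp0.le
        calc (2:ℝ)^(r:ℕ) * α ^ (2^c:ℕ)
            = ((2^c:ℕ):ℝ) * (α * α ^ (2^c - 1 : ℕ)) * ((2^(r-c):ℕ):ℝ) := by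
              rw [hαm']
              rw [← hcast]
              ring
          _ ≤ ((2^c:ℕ):ℝ) * (p * q ^ (2^c - 1 : ℕ)) * ((2^(r-c):ℕ):ℝ) := by
              apply mul_le_mul_of_nonneg_right _ (by positivity)
              apply mul_le_mul_of_nonneg_left hmono (by positivity)
      calc (2:ℝ) ^ ((r:ℝ)/2) ≤ (2:ℝ)^(r:ℕ) * α ^ (2^c : ℕ) := hα2c
        _ ≤ ((2^c:ℕ):ℝ) * (p * q ^ (2^c - 1 : ℕ)) * ((2^(r-c):ℕ):ℝ) := hbig
    calc (1 - sm) ^ (Fintype.card (Fin (r - c) → Bool))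
        ≤ (Real.exp (-sm)) ^ (Fintype.card (Fin (r - c) → Bool)) := step1
      _ = Real.exp (-(sm * (Fintype.card (Fin (r - c) → Bool) : ℝ))) := step2
      _ ≤ Real.exp (-(2:ℝ) ^ ((r:ℝ)/2)) := by
          apply Real.exp_le_exp.2
          linarith [step3]
  have ineq1 : (A.card : ℝ) * (p ^ k * q ^ (2^r - k)) ≤ Real.exp (-(2:ℝ) ^ ((r:ℝ)/2)) := by
    rw [← T1]
    calc ∑ R ∈ A, (∏ b : Fin (r-c) → Bool, W (fib r c hcr R b))
        ≤ ∑ R : Finset (Fin r → Bool), (∏ b : Fin (r-c) → Bool, W (fib r c hcr R b)) := T2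
      _ = (1 - sm) ^ (Fintype.card (Fin (r - c) → Bool)) := T3
      _ ≤ Real.exp (-(2:ℝ) ^ ((r:ℝ)/2)) := T4
  -- Stirling side
  have hCcard : ((Finset.univ.filter fun R : Finset (Fin r → Bool) => R.card = k).card : ℕ)
      = (2^r).choose k := by
    have : (Finset.univ.filter fun R : Finset (Fin r → Bool) => R.card = k)
        = Finset.powersetCard k (Finset.univ : Finset (Fin r → Bool)) := by
      rw [Finset.powersetCard_eq_filter, Finset.powerset_univ]
    rw [this, Finset.card_powersetCard, Finset.card_univ, hcardP]
  have h4n : 4 ≤ 2^r := by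
    calc (4:ℕ) = 2^2 := by norm_num
      _ ≤ 2^r := Nat.pow_le_pow_right (by norm_num) (by omega)
  have peak := my_peak (2^r) k h4n hk_pos hk_lt
  have hp_eq : ((k:ℝ)/((2^r:ℕ):ℝ)) = p := by
    rw [hpdef]
    push_cast
    ring
  have hq_eq : (((2^r - k:ℕ):ℝ)/((2^r:ℕ):ℝ)) = q := by
    rw [hqdef, hpdef]
    rw [Nat.cast_sub (by omega : k ≤ 2^r)]
    push_cast
    field_simp
  rw [hp_eq, hq_eq] at peak
  have hsqrt_eq : Real.sqrt (2*((2^r:ℕ):ℝ)) = (2:ℝ)^(((r:ℝ)+1)/2) := by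
    have h1 : (2*((2^r:ℕ):ℝ)) = (2:ℝ)^(r+1:ℕ) := by push_cast; ring
    rw [h1, Real.sqrt_eq_rpow, ← Real.rpow_natCast 2 (r+1),
      ← Real.rpow_mul (by norm_num : (0:ℝ) ≤ 2)]
    congr 1
    push_cast
    ring
  rw [hsqrt_eq] at peak
  -- final assembly
  set D : ℝ := (2:ℝ)^(((r:ℝ)+1)/2) with hD
  set E : ℝ := Real.exp (-(2:ℝ) ^ ((r:ℝ)/2)) with hE
  set t : ℝ := p ^ k * q ^ (2^r - k) with ht
  have hD0 : 0 < D := by rw [hD]; positivity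
  have hE0 : 0 < E := Real.exp_pos _
  have ht0 : 0 < t := by rw [ht]; positivity
  set Cc : ℝ := ((Finset.univ.filter fun R : Finset (Fin r → Bool) => R.card = k).card : ℝ)
    with hCc
  have ineq2 : 1/D ≤ Cc * t := by
    calc 1/D ≤ ((2^r).choose k : ℝ) * p ^ k * q ^ (2^r - k) := peak
      _ = Cc * t := by
          rw [hCc, ht, hCcard]
          ring
  have h1' : (1:ℝ) ≤ D * (Cc * t) := by
    have h := mul_le_mul_of_nonneg_left ineq2 hD0.le
    rwa [mul_one_div, div_self hD0.ne'] at h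
  have hAnn : (0:ℝ) ≤ (A.card : ℝ) := Nat.cast_nonneg _
  calc (A.card : ℝ) = (A.card : ℝ) * 1 := (mul_one _).symm
    _ ≤ (A.card : ℝ) * (D * (Cc * t)) := mul_le_mul_of_nonneg_left h1' hAnn
    _ = ((A.card : ℝ) * t) * (D * Cc) := by ring
    _ ≤ E * (D * Cc) := by
        apply mul_le_mul_of_nonneg_right _ (mul_nonneg hD0.le (Nat.cast_nonneg _))
        rw [hE]
        exact ineq1
    _ = D * E * Cc := by ring
end

section
/- Let M ∈ ℂ^{4×4} be Hermitian PSD and suppose some u ∈ span(M) (a vector in the column span of M, viewed as a function on {0,1}²) is nonsingular, i.e., det [[u(00), u(01)], [u(10), u(11)]] ≠ 0. Let ψ ∈ ℂ^{2^n} be a state with ⟨ψ, (M|_{(1,2)} ⊗ Id)ψ⟩ = 0 and ⟨ψ, (M|_{(1,3)} ⊗ Id)ψ⟩ = 0. Then ψ is invariant under the unitary swapping qubits 2 and 3. -/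
open scoped Classical ComplexOrder
open Matrix

/-- Update `z` at positions `i1, i2` with the values of `p`. -/
def upd2 {n : ℕ} (i1 i2 : Fin n) (p : Fin 2 → Fin 2) (z : Fin n → Fin 2) :
    Fin n → Fin 2 :=
  fun i => if i = i1 then p 0 else if i = i2 then p 1 else z i

section Aux

variable {n : ℕ} {i1 i2 : Fin n}

lemma mem_range_pair (i : Fin n) : i ∈ Set.range ![i1, i2] ↔ i = i1 ∨ i = i2 := by
  constructor
  · rintro ⟨j, rfl⟩
    fin_cases j <;> simp
  · rintro (rfl | rfl)
    exacts [⟨0, rfl⟩, ⟨1, rfl⟩]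

lemma upd2_comp (h : i1 ≠ i2) (p : Fin 2 → Fin 2) (z : Fin n → Fin 2) :
    (upd2 i1 i2 p z) ∘ ![i1, i2] = p := by
  funext j
  fin_cases j <;> simp [upd2, h.symm]

lemma upd2_upd2 (q p : Fin 2 → Fin 2) (z : Fin n → Fin 2) :
    upd2 i1 i2 q (upd2 i1 i2 p z) = upd2 i1 i2 q z := by
  funext i
  by_cases h1 : i = i1
  · simp [upd2, h1]
  by_cases h2 : i = i2
  · subst h2
    by_cases h1' : i = i1 <;> simp [upd2, h1']
  · simp [upd2, h1, h2]

lemma upd2_restore (h : i1 ≠ i2) (p : Fin 2 → Fin 2) (z : Fin n → Fin 2) :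
    upd2 i1 i2 (z ∘ ![i1, i2]) (upd2 i1 i2 p z) = z := by
  funext i
  by_cases h1 : i = i1
  · simp [upd2, h1]
  by_cases h2 : i = i2
  · subst h2
    simp [upd2, h1, h.symm]
  · simp [upd2, h1, h2]

lemma upd2_eq_of_compat (h : i1 ≠ i2) {x y : Fin n → Fin 2}
    (hc : ∀ i, i ∉ Set.range ![i1, i2] → x i = y i) :
    upd2 i1 i2 (y ∘ ![i1, i2]) x = y := by
  funext i
  by_cases h1 : i = i1
  · simp [upd2, h1]
  by_cases h2 : i = i2
  · subst h2
    simp [upd2, h1, h.symm]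
  · simp only [upd2, if_neg h1, if_neg h2]
    exact hc i (by rw [mem_range_pair]; tauto)

lemma compat_upd2 (p : Fin 2 → Fin 2) (z : Fin n → Fin 2) :
    ∀ i, i ∉ Set.range ![i1, i2] → z i = upd2 i1 i2 p z i := by
  intro i hi
  rw [mem_range_pair] at hi
  push_neg at hi
  simp [upd2, hi.1, hi.2]

lemma upd2_injective (h : i1 ≠ i2) (z : Fin n → Fin 2) :
    Function.Injective (fun p => upd2 i1 i2 p z) := by
  intro p q hpq
  have := congrArg (· ∘ ![i1, i2]) hpq
  simpa [upd2_comp h] using this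

lemma localOp_mulVec_s11 (h : i1 ≠ i2) (M : Matrix (Fin 2 → Fin 2) (Fin 2 → Fin 2) ℂ)
    (ψ : (Fin n → Fin 2) → ℂ) (x : Fin n → Fin 2) :
    ((localOp M ![i1, i2]) *ᵥ ψ) x
      = ∑ q : Fin 2 → Fin 2, M (x ∘ ![i1, i2]) q * ψ (upd2 i1 i2 q x) := by
  simp only [mulVec, dotProduct, localOp, Matrix.of_apply]
  symm
  refine Finset.sum_of_injOn (fun q => upd2 i1 i2 q x) ((upd2_injective h x).injOn)
    (fun q _ => by simp) ?_ ?_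
  · intro y _ hy
    rw [if_neg]
    · ring
    · intro hcomp
      exact hy ⟨y ∘ ![i1, i2], by simp, upd2_eq_of_compat h fun i hi => hcomp i hi⟩
  · intro q _
    rw [if_pos (compat_upd2 q x), upd2_comp h]

/-- The reindexing involution on pairs `(p, z)`. -/
def pairEquiv (i1 i2 : Fin n) (h : i1 ≠ i2) :
    (Fin 2 → Fin 2) × (Fin n → Fin 2) ≃ (Fin 2 → Fin 2) × (Fin n → Fin 2) where
  toFun pz := (pz.2 ∘ ![i1, i2], upd2 i1 i2 pz.1 pz.2)
  invFun pz := (pz.2 ∘ ![i1, i2], upd2 i1 i2 pz.1 pz.2)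
  left_inv := fun ⟨p, z⟩ => by
    simp only [Prod.mk.injEq]
    exact ⟨upd2_comp h p z, upd2_restore h p z⟩
  right_inv := fun ⟨p, z⟩ => by
    simp only [Prod.mk.injEq]
    exact ⟨upd2_comp h p z, upd2_restore h p z⟩

lemma energy_decomp (h : i1 ≠ i2) (M : Matrix (Fin 2 → Fin 2) (Fin 2 → Fin 2) ℂ)
    (ψ : (Fin n → Fin 2) → ℂ) :
    ∑ z : Fin n → Fin 2,
        star (fun p => ψ (upd2 i1 i2 p z)) ⬝ᵥ M *ᵥ (fun p => ψ (upd2 i1 i2 p z))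
      = 4 * (star ψ ⬝ᵥ (localOp M ![i1, i2]) *ᵥ ψ) := by
  set K : (Fin n → Fin 2) → ℂ :=
    fun x => star (ψ x) * ∑ q : Fin 2 → Fin 2, M (x ∘ ![i1, i2]) q * ψ (upd2 i1 i2 q x)
    with hK
  have hKupd : ∀ (p : Fin 2 → Fin 2) (z : Fin n → Fin 2),
      K (upd2 i1 i2 p z) = star (ψ (upd2 i1 i2 p z)) * ∑ q, M p q * ψ (upd2 i1 i2 q z) := by
    intro p z
    rw [hK]
    simp only [upd2_comp h, upd2_upd2]
  have hRHS : star ψ ⬝ᵥ (localOp M ![i1, i2]) *ᵥ ψ = ∑ x, K x := by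
    simp only [dotProduct, Pi.star_apply, hK]
    exact Finset.sum_congr rfl fun x _ => by rw [localOp_mulVec_s11 h]
  have hLHS : ∀ z : Fin n → Fin 2,
      star (fun p => ψ (upd2 i1 i2 p z)) ⬝ᵥ M *ᵥ (fun p => ψ (upd2 i1 i2 p z))
        = ∑ p : Fin 2 → Fin 2, K (upd2 i1 i2 p z) := by
    intro z
    simp only [dotProduct, Pi.star_apply, mulVec, hKupd]
  calc ∑ z : Fin n → Fin 2,
        star (fun p => ψ (upd2 i1 i2 p z)) ⬝ᵥ M *ᵥ (fun p => ψ (upd2 i1 i2 p z))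
      = ∑ z : Fin n → Fin 2, ∑ p : Fin 2 → Fin 2, K (upd2 i1 i2 p z) := by
        exact Finset.sum_congr rfl fun z _ => hLHS z
    _ = ∑ p : Fin 2 → Fin 2, ∑ z : Fin n → Fin 2, K (upd2 i1 i2 p z) := Finset.sum_comm
    _ = ∑ pz : (Fin 2 → Fin 2) × (Fin n → Fin 2), K (upd2 i1 i2 pz.1 pz.2) := by
        rw [Fintype.sum_prod_type]
    _ = ∑ pz : (Fin 2 → Fin 2) × (Fin n → Fin 2),
          K (upd2 i1 i2 (pairEquiv i1 i2 h pz).1 (pairEquiv i1 i2 h pz).2) := by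
        rw [Equiv.sum_comp (pairEquiv i1 i2 h) (fun pz => K (upd2 i1 i2 pz.1 pz.2))]
    _ = ∑ pz : (Fin 2 → Fin 2) × (Fin n → Fin 2), K pz.2 := by
        refine Finset.sum_congr rfl fun pz _ => ?_
        simp only [pairEquiv, Equiv.coe_fn_mk]
        rw [upd2_restore h]
    _ = 4 * (star ψ ⬝ᵥ (localOp M ![i1, i2]) *ᵥ ψ) := by
        rw [hRHS, Fintype.sum_prod_type]
        simp only [Finset.sum_const, Finset.card_univ, nsmul_eq_mul]
        norm_num

lemma key (h : i1 ≠ i2) {M : Matrix (Fin 2 → Fin 2) (Fin 2 → Fin 2) ℂ} (hM : M.PosSemidef)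
    {v u : (Fin 2 → Fin 2) → ℂ} (huv : M *ᵥ v = u) {ψ : (Fin n → Fin 2) → ℂ}
    (hψ : star ψ ⬝ᵥ (localOp M ![i1, i2]) *ᵥ ψ = 0) (z : Fin n → Fin 2) :
    ∑ p : Fin 2 → Fin 2, star (u p) * ψ (upd2 i1 i2 p z) = 0 := by
  have hsum : ∑ w : Fin n → Fin 2,
      star (fun p => ψ (upd2 i1 i2 p w)) ⬝ᵥ M *ᵥ (fun p => ψ (upd2 i1 i2 p w)) = 0 := by
    rw [energy_decomp h, hψ, mul_zero]
  have hz : star (fun p => ψ (upd2 i1 i2 p z)) ⬝ᵥ M *ᵥ (fun p => ψ (upd2 i1 i2 p z)) = 0 :=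
    (Finset.sum_eq_zero_iff_of_nonneg (fun w _ => hM.dotProduct_mulVec_nonneg _)).mp hsum z (Finset.mem_univ z)
  have hker : M *ᵥ (fun p => ψ (upd2 i1 i2 p z)) = 0 :=
    (hM.dotProduct_mulVec_zero_iff _).mp hz
  calc ∑ p : Fin 2 → Fin 2, star (u p) * ψ (upd2 i1 i2 p z)
      = star u ⬝ᵥ (fun p => ψ (upd2 i1 i2 p z)) := by
        simp only [dotProduct, Pi.star_apply]
    _ = star (M *ᵥ v) ⬝ᵥ (fun p => ψ (upd2 i1 i2 p z)) := by rw [huv]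
    _ = star v ⬝ᵥ Mᴴ *ᵥ (fun p => ψ (upd2 i1 i2 p z)) := by
        rw [star_mulVec, ← dotProduct_mulVec]
    _ = star v ⬝ᵥ M *ᵥ (fun p => ψ (upd2 i1 i2 p z)) := by rw [hM.1]
    _ = 0 := by rw [hker, dotProduct_zero]

end Aux

lemma sum_fn_two (F : (Fin 2 → Fin 2) → ℂ) :
    ∑ p : Fin 2 → Fin 2, F p = F ![0, 0] + F ![0, 1] + F ![1, 0] + F ![1, 1] := by
  rw [← Equiv.sum_comp (finTwoArrowEquiv (Fin 2)).symm F, Fintype.sum_prod_type,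
    Fin.sum_univ_two]
  simp only [finTwoArrowEquiv_symm_apply, Equiv.coe_fn_symm_mk, Fin.sum_univ_two]
  ring

/-- Triple update. -/
def wfun {n : ℕ} (i0 i1 i2 : Fin n) (x : Fin n → Fin 2) (a b c : Fin 2) : Fin n → Fin 2 :=
  fun i => if i = i0 then a else if i = i1 then b else if i = i2 then c else x i

lemma main {n : ℕ} {i0 i1 i2 : Fin n} (h01 : i0 ≠ i1) (h02 : i0 ≠ i2) (h12 : i1 ≠ i2)
    {M : Matrix (Fin 2 → Fin 2) (Fin 2 → Fin 2) ℂ} (hM : M.PosSemidef)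
    {v u : (Fin 2 → Fin 2) → ℂ} (hv : M *ᵥ v = u)
    (hns : u ![0, 0] * u ![1, 1] - u ![0, 1] * u ![1, 0] ≠ 0)
    {ψ : (Fin n → Fin 2) → ℂ}
    (hA : star ψ ⬝ᵥ (localOp M ![i0, i1]) *ᵥ ψ = 0)
    (hB : star ψ ⬝ᵥ (localOp M ![i0, i2]) *ᵥ ψ = 0)
    (x : Fin n → Fin 2) : ψ (x ∘ (Equiv.swap i1 i2)) = ψ x := by
  have hw1 : ∀ a b a' c : Fin 2,
      upd2 i0 i1 ![a, b] (upd2 i0 i2 ![a', c] x) = wfun i0 i1 i2 x a b c := by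
    intro a b a' c
    funext i
    by_cases h0 : i = i0
    · simp [upd2, wfun, h0]
    · by_cases hh1 : i = i1
      · simp [upd2, wfun, h0, hh1, h01.symm, h12.symm]
      · by_cases hh2 : i = i2 <;>
          simp [upd2, wfun, h0, hh1, hh2, h01.symm, h02.symm, h12.symm]
  have hw2 : ∀ a c a' b : Fin 2,
      upd2 i0 i2 ![a, c] (upd2 i0 i1 ![a', b] x) = wfun i0 i1 i2 x a b c := by
    intro a c a' b
    funext i
    by_cases h0 : i = i0
    · simp [upd2, wfun, h0]
    · by_cases hh2 : i = i2
      · simp [upd2, wfun, h0, hh2, h01.symm, h02.symm, h12, h12.symm]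
      · by_cases hh1 : i = i1 <;>
          simp [upd2, wfun, h0, hh1, hh2, h01.symm, h02.symm, h12, h12.symm]
  have EqA : ∀ c : Fin 2,
      star (u ![0, 0]) * ψ (wfun i0 i1 i2 x 0 0 c) + star (u ![0, 1]) * ψ (wfun i0 i1 i2 x 0 1 c)
        + star (u ![1, 0]) * ψ (wfun i0 i1 i2 x 1 0 c)
        + star (u ![1, 1]) * ψ (wfun i0 i1 i2 x 1 1 c) = 0 := by
    intro c
    have hz := key h01 hM hv hA (upd2 i0 i2 ![0, c] x)
    rw [sum_fn_two (fun p => star (u p) * ψ (upd2 i0 i1 p (upd2 i0 i2 ![0, c] x)))] at hz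
    simpa only [hw1] using hz
  have EqB : ∀ b : Fin 2,
      star (u ![0, 0]) * ψ (wfun i0 i1 i2 x 0 b 0) + star (u ![0, 1]) * ψ (wfun i0 i1 i2 x 0 b 1)
        + star (u ![1, 0]) * ψ (wfun i0 i1 i2 x 1 b 0)
        + star (u ![1, 1]) * ψ (wfun i0 i1 i2 x 1 b 1) = 0 := by
    intro b
    have hz := key h02 hM hv hB (upd2 i0 i1 ![0, b] x)
    rw [sum_fn_two (fun p => star (u p) * ψ (upd2 i0 i2 p (upd2 i0 i1 ![0, b] x)))] at hz
    simpa only [hw2] using hz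
  have hd : star (u ![0, 0]) * star (u ![1, 1]) - star (u ![0, 1]) * star (u ![1, 0]) ≠ 0 := by
    intro h0
    apply hns
    have h1 := congrArg star h0
    rw [star_sub, star_zero, StarMul.star_mul, StarMul.star_mul] at h1
    simp only [star_star] at h1
    linear_combination h1
  have hg : ∀ a : Fin 2, ψ (wfun i0 i1 i2 x a 0 1) = ψ (wfun i0 i1 i2 x a 1 0) := by
    intro a
    have e1 := EqA 1
    have e2 := EqA 0
    have e3 := EqB 1
    have e4 := EqB 0
    fin_cases a
    · have key0 : (star (u ![0, 0]) * star (u ![1, 1]) - star (u ![0, 1]) * star (u ![1, 0]))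
          * (ψ (wfun i0 i1 i2 x 0 0 1) - ψ (wfun i0 i1 i2 x 0 1 0)) = 0 := by
        linear_combination star (u ![1, 1]) * e1 - star (u ![1, 1]) * e3
          + star (u ![1, 0]) * e2 - star (u ![1, 0]) * e4
      rcases mul_eq_zero.mp key0 with h0 | h0
      · exact absurd h0 hd
      · exact sub_eq_zero.mp h0
    · have key1 : (star (u ![0, 0]) * star (u ![1, 1]) - star (u ![0, 1]) * star (u ![1, 0]))
          * (ψ (wfun i0 i1 i2 x 1 0 1) - ψ (wfun i0 i1 i2 x 1 1 0)) = 0 := by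
        linear_combination (-(star (u ![0, 1])) * e1) + star (u ![0, 1]) * e3
          - star (u ![0, 0]) * e2 + star (u ![0, 0]) * e4
      rcases mul_eq_zero.mp key1 with h0 | h0
      · exact absurd h0 hd
      · exact sub_eq_zero.mp h0
  have hv2 : ∀ t : Fin 2, t = 0 ∨ t = 1 := by decide
  have hswap_eq : x i1 = x i2 → x ∘ (Equiv.swap i1 i2) = x := by
    intro he
    funext i
    simp only [Function.comp_apply]
    rcases eq_or_ne i i1 with rfl | hne1
    · rw [Equiv.swap_apply_left, he]
    rcases eq_or_ne i i2 with rfl | hne2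
    · rw [Equiv.swap_apply_right, he]
    · rw [Equiv.swap_apply_of_ne_of_ne hne1 hne2]
  have hxw : ∀ b c : Fin 2, x i1 = b → x i2 = c → x = wfun i0 i1 i2 x (x i0) b c := by
    intro b c hb hc
    funext i
    simp only [wfun]
    by_cases h0 : i = i0
    · rw [h0, if_pos rfl]
    rw [if_neg h0]
    by_cases hh1 : i = i1
    · rw [if_pos hh1, hh1, hb]
    rw [if_neg hh1]
    by_cases hh2 : i = i2
    · rw [if_pos hh2, hh2, hc]
    · rw [if_neg hh2]
  have hxsw : ∀ b c : Fin 2, x i1 = b → x i2 = c →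
      x ∘ (Equiv.swap i1 i2) = wfun i0 i1 i2 x (x i0) c b := by
    intro b c hb hc
    funext i
    simp only [Function.comp_apply, wfun]
    by_cases h0 : i = i0
    · rw [h0, if_pos rfl, Equiv.swap_apply_of_ne_of_ne h01 h02]
    rw [if_neg h0]
    by_cases hh1 : i = i1
    · rw [if_pos hh1, hh1, Equiv.swap_apply_left, hc]
    rw [if_neg hh1]
    by_cases hh2 : i = i2
    · rw [if_pos hh2, hh2, Equiv.swap_apply_right, hb]
    · rw [if_neg hh2, Equiv.swap_apply_of_ne_of_ne hh1 hh2]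
  rcases hv2 (x i1) with hb | hb <;> rcases hv2 (x i2) with hc | hc
  · rw [hswap_eq (by rw [hb, hc])]
  · rw [hxsw 0 1 hb hc]
    conv_rhs => rw [hxw 0 1 hb hc]
    exact (hg (x i0)).symm
  · rw [hxsw 1 0 hb hc]
    conv_rhs => rw [hxw 1 0 hb hc]
    exact hg (x i0)
  · rw [hswap_eq (by rw [hb, hc])]

/-- Let `M ∈ ℂ^{4×4}` be PSD with a nonsingular vector `u` in its column
span (the 2×2 matrix of the entries of `u` has nonzero determinant).  If a state `ψ`
gives zero energy to the terms of `M` on qubit pairs `(0,1)` and `(0,2)`, then `ψ` is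
invariant under swapping qubits `1` and `2`. -/
theorem stmt11 (n : ℕ) (hn : 3 ≤ n)
    (M : Matrix (Fin 2 → Fin 2) (Fin 2 → Fin 2) ℂ) (hM : M.PosSemidef)
    (u : (Fin 2 → Fin 2) → ℂ) (hu : u ∈ Set.range M.mulVec)
    (hns : u ![0, 0] * u ![1, 1] - u ![0, 1] * u ![1, 0] ≠ 0)
    (ψ : (Fin n → Fin 2) → ℂ)
    (h12 : star ψ ⬝ᵥ (localOp M ![⟨0, by omega⟩, ⟨1, by omega⟩]).mulVec ψ = 0)
    (h13 : star ψ ⬝ᵥ (localOp M ![⟨0, by omega⟩, ⟨2, by omega⟩]).mulVec ψ = 0) :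
    ∀ x : Fin n → Fin 2,
      ψ (x ∘ (Equiv.swap (⟨1, by omega⟩ : Fin n) ⟨2, by omega⟩)) = ψ x := by
  obtain ⟨v, hv⟩ := hu
  intro x
  exact main (Fin.ne_of_val_ne (by norm_num)) (Fin.ne_of_val_ne (by norm_num))
    (Fin.ne_of_val_ne (by norm_num)) hM hv hns h12 h13 x
end

section
/- Let W ⊆ ℂ^4 be a linear subspace of dimension at least 3 such that every w ∈ W is singular (i.e., w(00)w(11) = w(01)w(10)). Then a contradiction arises: no such subspace exists. Equivalently, if every vector in span(M) of a PSD matrix M ∈ ℂ^{4×4} is singular, then rank(M) ≤ 2, and moreover M = M_1 ⊗ M_2 for some PSD M_1, M_2 ∈ ℂ^{2×2} with at least one of them of rank ≤ 1. -/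
open scoped ComplexOrder Kronecker
open Matrix

namespace Stmt13Aux

local notation "V4" => (Fin 2 × Fin 2) → ℂ

def Sing (w : (Fin 2 × Fin 2) → ℂ) : Prop :=
  w (0, 0) * w (1, 1) = w (0, 1) * w (1, 0)

def cross (x y : Fin 2 → ℂ) : ℂ := x 0 * y 1 - x 1 * y 0

lemma two_ne {x : Fin 2 → ℂ} (hx : x ≠ 0) : x 0 ≠ 0 ∨ x 1 ≠ 0 := by
  by_contra h
  push_neg at h
  exact hx (funext fun i => by fin_cases i <;> simp [h.1, h.2])

lemma exists_smul {x y : Fin 2 → ℂ} (hx : x ≠ 0) (h : cross x y = 0) :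
    ∃ t : ℂ, ∀ k, y k = t * x k := by
  unfold cross at h
  rcases two_ne hx with h0 | h1
  · refine ⟨y 0 / x 0, fun k => ?_⟩
    fin_cases k <;> simp only [Fin.zero_eta, Fin.mk_one]
    · field_simp
    · field_simp
      linear_combination h
  · refine ⟨y 1 / x 1, fun k => ?_⟩
    fin_cases k <;> simp only [Fin.zero_eta, Fin.mk_one]
    · field_simp
      linear_combination -h
    · field_simp

lemma factor' {A B C D : ℂ} (h : A * D = B * C) :
    ∃ a c : Fin 2 → ℂ, A = a 0 * c 0 ∧ B = a 0 * c 1 ∧ C = a 1 * c 0 ∧ D = a 1 * c 1 := by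
  by_cases hA : A ≠ 0
  · refine ⟨![A, C], ![1, B / A], ?_, ?_, ?_, ?_⟩ <;>
      simp only [Matrix.cons_val_zero, Matrix.cons_val_one, Matrix.head_cons]
    · ring
    · field_simp
    · ring
    · field_simp
      linear_combination h
  · push_neg at hA
    subst hA
    rw [zero_mul] at h
    by_cases hB : B = 0
    · exact ⟨![0, 1], ![C, D], by simp, by simp [hB], by simp, by simp⟩
    · have hC : C = 0 := by
        rcases mul_eq_zero.mp h.symm with h' | h'
        · exact absurd h' hB
        · exact h'
      refine ⟨![1, D / B], ![0, B], by simp, by simp, by simp [hC], ?_⟩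
      simp only [Matrix.cons_val_one, Matrix.head_cons, Matrix.cons_val_zero]
      field_simp

lemma factor {v : V4} (h : Sing v) :
    ∃ a c : Fin 2 → ℂ, ∀ i k, v (i, k) = a i * c k := by
  obtain ⟨a, c, e1, e2, e3, e4⟩ := factor' (h : v (0,0) * v (1,1) = v (0,1) * v (1,0))
  refine ⟨a, c, fun i k => ?_⟩
  fin_cases i <;> fin_cases k
  · exact e1
  · exact e2
  · exact e3
  · exact e4

lemma factor_ne {v : V4} {a c : Fin 2 → ℂ} (hf : ∀ i k, v (i, k) = a i * c k)
    (hv : v ≠ 0) : a ≠ 0 ∧ c ≠ 0 := by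
  constructor
  · intro h
    exact hv (funext fun p => by rcases p with ⟨i, k⟩; rw [hf i k, h]; simp)
  · intro h
    exact hv (funext fun p => by rcases p with ⟨i, k⟩; rw [hf i k, h]; simp)

lemma cross_or {S : Submodule ℂ V4} (hS : ∀ w ∈ S, Sing w)
    {u v : V4} (hu : u ∈ S) (hv : v ∈ S)
    {a c a' c' : Fin 2 → ℂ} (hfu : ∀ i k, u (i, k) = a i * c k)
    (hfv : ∀ i k, v (i, k) = a' i * c' k) :
    cross a a' = 0 ∨ cross c c' = 0 := by
  have e := hS (u + v) (S.add_mem hu hv)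
  unfold Sing at e
  simp only [Pi.add_apply, hfu, hfv] at e
  refine mul_eq_zero.mp ?_
  unfold cross
  linear_combination e

lemma structure_lemma (S : Submodule ℂ V4) (hS : ∀ w ∈ S, Sing w) :
    (∃ a : Fin 2 → ℂ, a ≠ 0 ∧ ∀ v ∈ S, ∃ c : Fin 2 → ℂ, ∀ i k, v (i, k) = a i * c k) ∨
    (∃ c : Fin 2 → ℂ, c ≠ 0 ∧ ∀ v ∈ S, ∃ a : Fin 2 → ℂ, ∀ i k, v (i, k) = a i * c k) := by
  by_cases hbot : ∀ v ∈ S, v = (0 : V4)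
  · left
    refine ⟨![1, 0], ?_, fun v hv => ⟨0, fun i k => by rw [hbot v hv]; simp⟩⟩
    intro h
    have := congrFun h 0
    simp at this
  · push_neg at hbot
    obtain ⟨v0, hv0S, hv0⟩ := hbot
    obtain ⟨a0, c0, hf0⟩ := factor (hS v0 hv0S)
    obtain ⟨ha0, hc0⟩ := factor_ne hf0 hv0
    by_cases hA : ∀ v ∈ S, ∃ c : Fin 2 → ℂ, ∀ i k, v (i, k) = a0 i * c k
    · exact Or.inl ⟨a0, ha0, hA⟩
    · right
      refine ⟨c0, hc0, ?_⟩
      push_neg at hA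
      obtain ⟨u, huS, hu⟩ := hA
      obtain ⟨au, cu, hfu⟩ := factor (hS u huS)
      have hune : u ≠ 0 := by
        intro h
        obtain ⟨i, k, hik⟩ := hu 0
        exact hik (by rw [h]; simp)
      obtain ⟨hau, hcu⟩ := factor_ne hfu hune
      have hcross_a : cross a0 au ≠ 0 := by
        intro h
        obtain ⟨t, ht⟩ := exists_smul ha0 h
        obtain ⟨i, k, hik⟩ := hu fun k => t * cu k
        exact hik (by rw [hfu i k, ht i]; ring)
      have hcc : cross c0 cu = 0 := by
        rcases cross_or hS hv0S huS hf0 hfu with h | h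
        · exact absurd h hcross_a
        · exact h
      obtain ⟨s, hs⟩ := exists_smul hc0 hcc
      have hsne : s ≠ 0 := by
        intro h
        exact hcu (funext fun k => by rw [hs k, h]; simp)
      intro w hwS
      by_cases hw0 : w = 0
      · exact ⟨0, fun i k => by rw [hw0]; simp⟩
      obtain ⟨aw, cw, hfw⟩ := factor (hS w hwS)
      obtain ⟨haw, hcw⟩ := factor_ne hfw hw0
      have hccw : cross c0 cw = 0 := by
        rcases cross_or hS hv0S hwS hf0 hfw with h1 | h1
        · rcases cross_or hS huS hwS hfu hfw with h2 | h2
          · exfalso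
            apply hcross_a
            obtain ⟨p, hp⟩ := exists_smul haw
              (show cross aw a0 = 0 by unfold cross at h1 ⊢; linear_combination -h1)
            obtain ⟨q, hq⟩ := exists_smul haw
              (show cross aw au = 0 by unfold cross at h2 ⊢; linear_combination -h2)
            unfold cross
            rw [hp 0, hp 1, hq 0, hq 1]
            ring
          · have h3 : s * (c0 0 * cw 1 - c0 1 * cw 0) = 0 := by
              unfold cross at h2
              rw [hs 0, hs 1] at h2
              linear_combination h2
            rcases mul_eq_zero.mp h3 with h | h
            · exact absurd h hsne
            · exact h
        · exact h1
      obtain ⟨r, hr⟩ := exists_smul hc0 hccw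
      exact ⟨fun i => r * aw i, fun i k => by rw [hfw i k, hr k]; ring⟩

lemma dim_le_left {W : Submodule ℂ V4} {a : Fin 2 → ℂ}
    (h : ∀ v ∈ W, ∃ c : Fin 2 → ℂ, ∀ i k, v (i, k) = a i * c k) :
    Module.finrank ℂ W ≤ 2 := by
  let T : (Fin 2 → ℂ) →ₗ[ℂ] V4 :=
    { toFun := fun c => fun p => a p.1 * c p.2
      map_add' := fun c d => funext fun p => by simp [mul_add]
      map_smul' := fun r c => funext fun p => by simp [smul_eq_mul]; ring }
  have hle : W ≤ LinearMap.range T := by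
    intro v hv
    obtain ⟨c, hc⟩ := h v hv
    exact ⟨c, funext fun p => by rcases p with ⟨i, k⟩; exact (hc i k).symm⟩
  calc Module.finrank ℂ W ≤ Module.finrank ℂ (LinearMap.range T) :=
        Submodule.finrank_mono hle
    _ ≤ Module.finrank ℂ (Fin 2 → ℂ) := LinearMap.finrank_range_le T
    _ = 2 := by simp

lemma dim_le_right {W : Submodule ℂ V4} {c : Fin 2 → ℂ}
    (h : ∀ v ∈ W, ∃ a : Fin 2 → ℂ, ∀ i k, v (i, k) = a i * c k) :
    Module.finrank ℂ W ≤ 2 := by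
  let T : (Fin 2 → ℂ) →ₗ[ℂ] V4 :=
    { toFun := fun d => fun p => d p.1 * c p.2
      map_add' := fun x y => funext fun p => by simp [add_mul]
      map_smul' := fun r x => funext fun p => by simp [smul_eq_mul]; ring }
  have hle : W ≤ LinearMap.range T := by
    intro v hv
    obtain ⟨d, hd⟩ := h v hv
    exact ⟨d, funext fun p => by rcases p with ⟨i, k⟩; exact (hd i k).symm⟩
  calc Module.finrank ℂ W ≤ Module.finrank ℂ (LinearMap.range T) :=
        Submodule.finrank_mono hle
    _ ≤ Module.finrank ℂ (Fin 2 → ℂ) := LinearMap.finrank_range_le T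
    _ = 2 := by simp

lemma outer_psd (b : Fin 2 → ℂ) : (Matrix.vecMulVec b (star b)).PosSemidef := by
  have h : Matrix.vecMulVec b (star b) =
      (Matrix.replicateRow (Fin 1) (star b))ᴴ * Matrix.replicateRow (Fin 1) (star b) := by
    rw [Matrix.vecMulVec_eq (Fin 1), Matrix.conjTranspose_replicateRow, star_star]
    rfl
  rw [h]
  exact Matrix.posSemidef_conjTranspose_mul_self _

lemma outer_rank (b : Fin 2 → ℂ) : (Matrix.vecMulVec b (star b)).rank ≤ 1 := by
  have h : Matrix.vecMulVec b (star b) =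
      (Matrix.replicateRow (Fin 1) (star b))ᴴ * Matrix.replicateRow (Fin 1) (star b) := by
    rw [Matrix.vecMulVec_eq (Fin 1), Matrix.conjTranspose_replicateRow, star_star]
    rfl
  rw [h]
  exact (Matrix.rank_mul_le_right _ _).trans
    ((Matrix.rank_le_card_height _).trans (by simp))

lemma kron_left {M : Matrix (Fin 2 × Fin 2) (Fin 2 × Fin 2) ℂ} (hM : M.PosSemidef)
    {a : Fin 2 → ℂ} (ha : a ≠ 0)
    (h : ∀ j l, ∃ c : Fin 2 → ℂ, ∀ i k, M (i, k) (j, l) = a i * c k) :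
    ∃ M1 M2 : Matrix (Fin 2) (Fin 2) ℂ,
      M1.PosSemidef ∧ M2.PosSemidef ∧ M1.rank ≤ 1 ∧ M = M1 ⊗ₖ M2 := by
  choose c hc using h
  obtain ⟨i0, hi0⟩ : ∃ i0, a i0 ≠ 0 := by
    rcases two_ne ha with h' | h'
    exacts [⟨0, h'⟩, ⟨1, h'⟩]
  have hsi0 : (starRingEnd ℂ) (a i0) ≠ 0 := star_ne_zero.mpr hi0
  set b : Fin 2 → ℂ := fun i => a i / a i0 with hb
  refine ⟨Matrix.vecMulVec b (star b), M.submatrix (Prod.mk i0) (Prod.mk i0),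
    outer_psd b, hM.submatrix _, outer_rank b, ?_⟩
  ext ⟨i, k⟩ ⟨j, l⟩
  simp only [Matrix.kroneckerMap_apply, Matrix.vecMulVec_apply, Matrix.submatrix_apply,
    Pi.star_apply]
  have K1 : M (i, k) (j, l) * a i0 = M (i0, k) (j, l) * a i := by
    linear_combination a i0 * hc j l i k - a i * hc j l i0 k
  have f3 : M (i0, k) (j, l) = star (a j) * star (c i0 k l) := by
    rw [← hM.1.apply (i0, k) (j, l), hc i0 k j l, star_mul']
  have f4 : M (i0, k) (i0, l) = star (a i0) * star (c i0 k l) := by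
    rw [← hM.1.apply (i0, k) (i0, l), hc i0 k i0 l, star_mul']
  have K2 : M (i0, k) (j, l) * star (a i0) = M (i0, k) (i0, l) * star (a j) := by
    linear_combination star (a i0) * f3 - star (a j) * f4
  rw [hb]
  simp only [star_div₀, Complex.star_def] at K2 ⊢
  field_simp
  linear_combination (starRingEnd ℂ) (a i0) * K1 + a i * K2

lemma kron_right {M : Matrix (Fin 2 × Fin 2) (Fin 2 × Fin 2) ℂ} (hM : M.PosSemidef)
    {c : Fin 2 → ℂ} (hcne : c ≠ 0)
    (h : ∀ j l, ∃ d : Fin 2 → ℂ, ∀ i k, M (i, k) (j, l) = d i * c k) :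
    ∃ M1 M2 : Matrix (Fin 2) (Fin 2) ℂ,
      M1.PosSemidef ∧ M2.PosSemidef ∧ M2.rank ≤ 1 ∧ M = M1 ⊗ₖ M2 := by
  choose d hd using h
  obtain ⟨k0, hk0⟩ : ∃ k0, c k0 ≠ 0 := by
    rcases two_ne hcne with h' | h'
    exacts [⟨0, h'⟩, ⟨1, h'⟩]
  have hsk0 : (starRingEnd ℂ) (c k0) ≠ 0 := star_ne_zero.mpr hk0
  set b : Fin 2 → ℂ := fun k => c k / c k0 with hb
  refine ⟨M.submatrix (fun i => (i, k0)) (fun j => (j, k0)), Matrix.vecMulVec b (star b),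
    hM.submatrix _, outer_psd b, outer_rank b, ?_⟩
  ext ⟨i, k⟩ ⟨j, l⟩
  simp only [Matrix.kroneckerMap_apply, Matrix.vecMulVec_apply, Matrix.submatrix_apply,
    Pi.star_apply]
  have K1 : M (i, k) (j, l) * c k0 = M (i, k0) (j, l) * c k := by
    linear_combination c k0 * hd j l i k - c k * hd j l i k0
  have f3 : M (i, k0) (j, l) = star (d i k0 j) * star (c l) := by
    rw [← hM.1.apply (i, k0) (j, l), hd i k0 j l, star_mul']
  have f4 : M (i, k0) (j, k0) = star (d i k0 j) * star (c k0) := by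
    rw [← hM.1.apply (i, k0) (j, k0), hd i k0 j k0, star_mul']
  have K2 : M (i, k0) (j, l) * star (c k0) = M (i, k0) (j, k0) * star (c l) := by
    linear_combination star (c k0) * f3 - star (c l) * f4
  rw [hb]
  simp only [star_div₀, Complex.star_def] at K2 ⊢
  field_simp
  linear_combination (starRingEnd ℂ) (c k0) * K1 + c k * K2

end Stmt13Aux

/-- (a) No linear subspace of `ℂ^4 ≅ ℂ^{2×2}` of dimension `≥ 3` consists
entirely of singular vectors (`w(00)w(11) = w(01)w(10)`); i.e. every subspace of
singular vectors has dimension at most 2.  (b) Consequently, if every vector in the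
column span of a PSD matrix `M ∈ ℂ^{4×4}` is singular, then `rank M ≤ 2`, and moreover
`M = M₁ ⊗ M₂` for PSD `M₁, M₂ ∈ ℂ^{2×2}` with at least one of them of rank `≤ 1`. -/
theorem stmt13 :
    (∀ W : Submodule ℂ ((Fin 2 × Fin 2) → ℂ),
      (∀ w ∈ W, w (0, 0) * w (1, 1) = w (0, 1) * w (1, 0)) →
      Module.finrank ℂ W ≤ 2) ∧
    (∀ M : Matrix (Fin 2 × Fin 2) (Fin 2 × Fin 2) ℂ, M.PosSemidef →
      (∀ u ∈ Set.range M.mulVec, u (0, 0) * u (1, 1) = u (0, 1) * u (1, 0)) →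
      M.rank ≤ 2 ∧
        ∃ M1 M2 : Matrix (Fin 2) (Fin 2) ℂ,
          M1.PosSemidef ∧ M2.PosSemidef ∧ (M1.rank ≤ 1 ∨ M2.rank ≤ 1) ∧
          M = M1 ⊗ₖ M2) := by
  have parta : ∀ W : Submodule ℂ ((Fin 2 × Fin 2) → ℂ),
      (∀ w ∈ W, w (0, 0) * w (1, 1) = w (0, 1) * w (1, 0)) →
      Module.finrank ℂ W ≤ 2 := by
    intro W hW
    rcases Stmt13Aux.structure_lemma W hW with ⟨a, _, h⟩ | ⟨c, _, h⟩
    · exact Stmt13Aux.dim_le_left h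
    · exact Stmt13Aux.dim_le_right h
  refine ⟨parta, fun M hM hsing => ?_⟩
  have hS : ∀ w ∈ LinearMap.range M.mulVecLin, Stmt13Aux.Sing w := by
    rintro w ⟨x, rfl⟩
    exact hsing _ ⟨x, rfl⟩
  have hcol : ∀ (a : Fin 2 → ℂ),
      (∀ v ∈ LinearMap.range M.mulVecLin, ∃ c : Fin 2 → ℂ, ∀ i k, v (i, k) = a i * c k) →
      ∀ j l, ∃ c : Fin 2 → ℂ, ∀ i k, M (i, k) (j, l) = a i * c k := by
    intro a h j l
    obtain ⟨cc, hcc⟩ := h _ ⟨Pi.single (j, l) 1, rfl⟩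
    refine ⟨cc, fun i k => ?_⟩
    have := hcc i k
    simpa [Matrix.mulVecLin_apply, Matrix.mulVec_single] using this
  refine ⟨?_, ?_⟩
  · rw [Matrix.rank]
    exact parta _ hS
  · rcases Stmt13Aux.structure_lemma _ hS with ⟨a, ha, h⟩ | ⟨c, hc, h⟩
    · obtain ⟨M1, M2, h1, h2, hr, heq⟩ := Stmt13Aux.kron_left hM ha (hcol a h)
      exact ⟨M1, M2, h1, h2, Or.inl hr, heq⟩
    · have hcol2 : ∀ j l, ∃ d : Fin 2 → ℂ, ∀ i k, M (i, k) (j, l) = d i * c k := by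
        intro j l
        obtain ⟨dd, hdd⟩ := h _ ⟨Pi.single (j, l) 1, rfl⟩
        refine ⟨dd, fun i k => ?_⟩
        have := hdd i k
        simpa [Matrix.mulVecLin_apply, Matrix.mulVec_single] using this
      obtain ⟨M1, M2, h1, h2, hr, heq⟩ := Stmt13Aux.kron_right hM hc hcol2
      exact ⟨M1, M2, h1, h2, Or.inr hr, heq⟩
end

section
/- Consider the linear map F : A_k × A_k → ℂ^{(k−1)×k} defined on pairs of k×k complex anti-symmetric matrices (K_0, K_1) by F(K_0, K_1) = A K_0 + B K_1, where A ∈ ℂ^{(k−1)×k} is the identity with last row deleted (A = [Id_{k−1} | 0]) and B ∈ ℂ^{(k−1)×k} is the identity with first row deleted (B = [0 | Id_{k−1}]). Then F is a linear isomorphism: the domain and codomain both have dimension k(k−1), and F is injective. -/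
open Matrix

/-- Mutual recursion giving the super/sub-diagonal data of the two skew matrices
built from `M`. -/
noncomputable def abSeq (M : ℕ → ℕ → ℂ) : ℕ → (ℕ → ℂ) × (ℕ → ℂ)
  | 0 => (fun _ => 0, fun _ => 0)
  | t + 1 =>
    (fun i => M i (i + t + 1) - (abSeq M t).2 (i + 1),
     fun i => -M (i + t) i - (abSeq M t).1 i)

noncomputable def skewOf (k : ℕ) (f : ℕ → ℕ → ℂ) : Matrix (Fin k) (Fin k) ℂ :=
  Matrix.of fun i j =>
    if (i : ℕ) < (j : ℕ) then f ((j : ℕ) - (i : ℕ)) (i : ℕ)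
    else -f ((i : ℕ) - (j : ℕ)) (j : ℕ)

lemma skewOf_anti (k : ℕ) (f : ℕ → ℕ → ℂ) (hf : f 0 = fun _ => 0) :
    (skewOf k f)ᵀ = -(skewOf k f) := by
  ext i j
  rw [transpose_apply, neg_apply]
  simp only [skewOf, Matrix.of_apply]
  rcases lt_trichotomy (i : ℕ) (j : ℕ) with h | h | h
  · rw [if_neg (by omega), if_pos h]
  · rw [if_neg (by omega), if_neg (by omega), h, Nat.sub_self, hf]
    simp
  · rw [if_pos h, if_neg (by omega)]
    ring

lemma abSeq_zero_eq (k : ℕ) (e₀ e₁ : ℕ → ℕ → ℂ)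
    (ha₀ : ∀ i j, e₀ i j = -e₀ j i) (ha₁ : ∀ i j, e₁ i j = -e₁ j i)
    (heq : ∀ i j, i + 1 < k → j < k → e₀ i j + e₁ (i + 1) j = 0) :
    ∀ t i, i + t < k → e₀ i (i + t) = 0 ∧ e₁ i (i + t) = 0 := by
  intro t
  induction t using Nat.strong_induction_on with
  | _ t ih =>
    intro i hik
    match t with
    | 0 =>
      constructor
      · exact add_self_eq_zero.mp (add_eq_zero_iff_eq_neg.mpr (ha₀ i i))
      · exact add_self_eq_zero.mp (add_eq_zero_iff_eq_neg.mpr (ha₁ i i))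
    | s + 1 =>
      have h1 : e₁ (i + 1) (i + 1 + s) = 0 := (ih s (by omega) (i + 1) (by omega)).2
      have hD : e₀ i (i + s) = 0 := (ih s (by omega) i (by omega)).1
      constructor
      · have h2 := heq i (i + s + 1) (by omega) (by omega)
        rw [show i + s + 1 = i + 1 + s from by omega] at h2
        rw [show i + (s + 1) = i + 1 + s from by omega]
        rw [h1, add_zero] at h2
        exact h2
      · have hB := heq (i + s) i (by omega) (by omega)
        have hC := ha₀ (i + s) i
        rw [hD, neg_zero] at hC
        rw [hC, zero_add] at hB
        rw [show i + (s + 1) = i + s + 1 from rfl, ha₁ i (i + s + 1), hB, neg_zero]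

/-- `F (K₀, K₁) = A K₀ + B K₁` where `A = [Id_{k-1} | 0]` deletes the last row and
`B = [0 | Id_{k-1}]` deletes the first row:
`F (K₀, K₁) i j = (K₀) i j + (K₁) (i+1) j` for `i : Fin (k-1)`. -/
def rowShiftSum (k : ℕ) (K : Matrix (Fin k) (Fin k) ℂ × Matrix (Fin k) (Fin k) ℂ) :
    Matrix (Fin (k - 1)) (Fin k) ℂ :=
  Matrix.of fun i j =>
    K.1 ⟨(i : ℕ), by have := i.isLt; omega⟩ j +
    K.2 ⟨(i : ℕ) + 1, by have := i.isLt; omega⟩ j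

/-- The linear map `F : A_k × A_k → ℂ^{(k-1)×k}`,
`F(K₀,K₁) = A K₀ + B K₁` (with `A` the identity with the last row deleted and `B` the
identity with the first row deleted), defined on pairs of anti-symmetric `k×k` complex
matrices, is a linear isomorphism: the codomain has dimension `k(k-1)` (as does the
domain) and `F` is injective, hence bijective. -/
theorem stmt15 (k : ℕ) (hk : 1 ≤ k) :
    Module.finrank ℂ (Matrix (Fin (k - 1)) (Fin k) ℂ) = k * (k - 1) ∧
    Function.Bijective
      (fun K : {A : Matrix (Fin k) (Fin k) ℂ // Aᵀ = -A} ×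
               {A : Matrix (Fin k) (Fin k) ℂ // Aᵀ = -A} =>
        rowShiftSum k (K.1.1, K.2.1)) := by
  constructor
  · simp [Module.finrank_matrix, Nat.mul_comm]
  constructor
  · -- injectivity
    rintro ⟨⟨K₀, hK₀⟩, ⟨K₁, hK₁⟩⟩ ⟨⟨L₀, hL₀⟩, ⟨L₁, hL₁⟩⟩ hfun
    have h : rowShiftSum k (K₀, K₁) = rowShiftSum k (L₀, L₁) := hfun
    set e₀ : ℕ → ℕ → ℂ := fun i j =>
      if h : i < k ∧ j < k then K₀ ⟨i, h.1⟩ ⟨j, h.2⟩ - L₀ ⟨i, h.1⟩ ⟨j, h.2⟩ else 0 with he₀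
    set e₁ : ℕ → ℕ → ℂ := fun i j =>
      if h : i < k ∧ j < k then K₁ ⟨i, h.1⟩ ⟨j, h.2⟩ - L₁ ⟨i, h.1⟩ ⟨j, h.2⟩ else 0 with he₁
    have anti : ∀ (A : Matrix (Fin k) (Fin k) ℂ), Aᵀ = -A →
        ∀ (x y : Fin k), A x y = -A y x := by
      intro A hA x y
      have := congrFun (congrFun hA y) x
      simpa [transpose_apply] using this
    have ha₀ : ∀ i j, e₀ i j = -e₀ j i := by
      intro i j
      by_cases hij : i < k ∧ j < k
      · rw [he₀]; simp only [dif_pos hij, dif_pos (And.intro hij.2 hij.1)]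
        rw [anti K₀ hK₀ ⟨i, hij.1⟩ ⟨j, hij.2⟩, anti L₀ hL₀ ⟨i, hij.1⟩ ⟨j, hij.2⟩]
        ring
      · rw [he₀]; simp only [dif_neg hij, dif_neg (fun h' : j < k ∧ i < k => hij ⟨h'.2, h'.1⟩)]
        ring
    have ha₁ : ∀ i j, e₁ i j = -e₁ j i := by
      intro i j
      by_cases hij : i < k ∧ j < k
      · rw [he₁]; simp only [dif_pos hij, dif_pos (And.intro hij.2 hij.1)]
        rw [anti K₁ hK₁ ⟨i, hij.1⟩ ⟨j, hij.2⟩, anti L₁ hL₁ ⟨i, hij.1⟩ ⟨j, hij.2⟩]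
        ring
      · rw [he₁]; simp only [dif_neg hij, dif_neg (fun h' : j < k ∧ i < k => hij ⟨h'.2, h'.1⟩)]
        ring
    have heq : ∀ i j, i + 1 < k → j < k → e₀ i j + e₁ (i + 1) j = 0 := by
      intro i j hi hj
      have hcf := congrFun (congrFun h ⟨i, by omega⟩) ⟨j, hj⟩
      simp only [rowShiftSum, Matrix.of_apply] at hcf
      rw [he₀, he₁]
      simp only [dif_pos (And.intro (show i < k by omega) hj),
        dif_pos (And.intro hi hj)]
      have h' : K₀ ⟨i, by omega⟩ ⟨j, hj⟩ + K₁ ⟨i + 1, hi⟩ ⟨j, hj⟩ =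
          L₀ ⟨i, by omega⟩ ⟨j, hj⟩ + L₁ ⟨i + 1, hi⟩ ⟨j, hj⟩ := hcf
      rw [sub_add_sub_comm, h', sub_self]
    have key := abSeq_zero_eq k e₀ e₁ ha₀ ha₁ heq
    have zero : ∀ i j : Fin k, e₀ (i : ℕ) (j : ℕ) = 0 ∧ e₁ (i : ℕ) (j : ℕ) = 0 := by
      intro i j
      rcases le_or_gt (i : ℕ) (j : ℕ) with hij | hij
      · have := key ((j : ℕ) - i) i (by omega)
        rwa [show (i : ℕ) + ((j : ℕ) - i) = j from by omega] at this
      · have := key ((i : ℕ) - j) j (by omega)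
        rw [show (j : ℕ) + ((i : ℕ) - j) = i from by omega] at this
        rw [ha₀ (i : ℕ) (j : ℕ), ha₁ (i : ℕ) (j : ℕ), this.1, this.2]
        simp
    have hK0L0 : K₀ = L₀ := by
      ext i j
      have hz := (zero i j).1
      rw [he₀] at hz
      simp only [dif_pos (And.intro i.isLt j.isLt)] at hz
      have hz' := sub_eq_zero.mp hz
      simpa using hz'
    have hK1L1 : K₁ = L₁ := by
      ext i j
      have hz := (zero i j).2
      rw [he₁] at hz
      simp only [dif_pos (And.intro i.isLt j.isLt)] at hz
      have hz' := sub_eq_zero.mp hz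
      simpa using hz'
    simp [Prod.ext_iff, Subtype.ext_iff, hK0L0, hK1L1]
  · -- surjectivity
    intro M
    set M' : ℕ → ℕ → ℂ := fun i j =>
      if h : i < k - 1 ∧ j < k then M ⟨i, h.1⟩ ⟨j, h.2⟩ else 0 with hM'
    refine ⟨⟨⟨skewOf k (fun t => (abSeq M' t).1), skewOf_anti k _ (by simp [abSeq])⟩,
            ⟨skewOf k (fun t => (abSeq M' t).2), skewOf_anti k _ (by simp [abSeq])⟩⟩, ?_⟩
    ext i j
    simp only [rowShiftSum, Matrix.of_apply, skewOf]
    have hMij : M' (i : ℕ) (j : ℕ) = M i j := by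
      rw [hM']
      simp only [dif_pos (And.intro i.isLt j.isLt)]
    by_cases hij : (i : ℕ) < (j : ℕ)
    · rw [if_pos hij]
      rw [show (j : ℕ) - (i : ℕ) = ((j : ℕ) - (i : ℕ) - 1) + 1 from by omega]
      set t := (j : ℕ) - (i : ℕ) - 1 with ht
      have hstep : (abSeq M' (t + 1)).1 (i : ℕ) =
          M' (i : ℕ) ((i : ℕ) + t + 1) - (abSeq M' t).2 ((i : ℕ) + 1) := rfl
      rw [hstep, show (i : ℕ) + t + 1 = (j : ℕ) from by omega]
      by_cases hij1 : (i : ℕ) + 1 < (j : ℕ)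
      · rw [if_pos hij1, show (j : ℕ) - ((i : ℕ) + 1) = t from by omega, hMij]
        ring
      · rw [if_neg hij1, show (i : ℕ) + 1 - (j : ℕ) = 0 from by omega,
          show t = 0 from by omega, hMij]
        simp [abSeq]
    · rw [if_neg hij, if_neg (by omega)]
      rw [show (i : ℕ) + 1 - (j : ℕ) = ((i : ℕ) - (j : ℕ)) + 1 from by omega]
      set s := (i : ℕ) - (j : ℕ) with hs
      have hstep : (abSeq M' (s + 1)).2 (j : ℕ) =
          -M' ((j : ℕ) + s) (j : ℕ) - (abSeq M' s).1 (j : ℕ) := rfl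
      rw [hstep, show (j : ℕ) + s = (i : ℕ) from by omega, hMij]
      ring
end
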